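/- arXiv:2404.07599 — 6 statements merged into one kernel-verified Lean document; each statement's English description precedes it below -/
import Mathlib

section
/- Let M be an infinite metric space with a distinguished base point 0, and suppose the set M′ of accumulation points of M has density character at least 2^ℵ₀ (i.e., every dense subset of M′ has cardinality at least the cardinality of the continuum). Then (PNA(M) \ SNA(M)) ∪ {0} contains an isometric copy of ℓ₁: there exists a linear map T : ℓ₁ → Lip₀(M) such that ‖T a‖ = ‖a‖₁ for every a ∈ ℓ₁, and for every nonzero a, the function T a attains its pointwise norm but does not strongly attain its norm. -/
open Filter Set
open scoped ZeroAtInfty ENNReal NNReal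

/-- The optimal Lipschitz constant (Lipschitz norm) of `f : M → ℝ`. -/
noncomputable def lipNorm {M : Type*} [MetricSpace M] (f : M → ℝ) : ℝ :=
  sSup {r : ℝ | ∃ p q : M, p ≠ q ∧ r = |f p - f q| / dist p q}

/-- `f` belongs to `Lip₀(M)`: it is Lipschitz and vanishes at the base point. -/
def MemLip0 {M : Type*} [MetricSpace M] (base : M) (f : M → ℝ) : Prop :=
  f base = 0 ∧ ∃ K : ℝ≥0, LipschitzWith K f

/-- `f` strongly attains its (Lipschitz) norm. -/
def StronglyAttains {M : Type*} [MetricSpace M] (f : M → ℝ) : Prop :=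
  ∃ p q : M, p ≠ q ∧ |f p - f q| = lipNorm f * dist p q

/-- `f` attains its pointwise norm. -/
def PointwiseAttains {M : Type*} [MetricSpace M] (f : M → ℝ) : Prop :=
  ∃ p : M, sSup {r : ℝ | ∃ q : M, q ≠ p ∧ r = |f p - f q| / dist p q} = lipNorm f

universe u


section GG
noncomputable def gg (c t : ℝ) : ℝ := t * (max (c - t) 0)^2 / c^2

lemma gg_zero (c : ℝ) : gg c 0 = 0 := by simp [gg]

lemma gg_eq {c t : ℝ} (h : t ≤ c) : gg c t = t * (c - t)^2 / c^2 := by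
  rw [gg, max_eq_left (by linarith)]

lemma gg_eq' {c t : ℝ} (h : c ≤ t) : gg c t = 0 := by
  rw [gg, max_eq_right (by linarith)]; ring

lemma gg_nonneg {c t : ℝ} (ht : 0 ≤ t) : 0 ≤ gg c t := by
  apply div_nonneg (mul_nonneg ht (sq_nonneg _)) (sq_nonneg _)

lemma gg_le {c t : ℝ} (hc : 0 < c) (ht : 0 ≤ t) : gg c t ≤ t := by
  rcases le_or_gt t c with h | h
  · rw [gg_eq h, div_le_iff₀ (by positivity)]
    nlinarith [sq_nonneg (c - t), sq_nonneg t]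
  · rw [gg_eq' h.le]; linarith

lemma gg_lt_sub {c t : ℝ} (hc : 0 < c) (ht : 0 ≤ t) (htc : t < c) : gg c t < c - t := by
  rw [gg_eq htc.le, div_lt_iff₀ (by positivity)]
  have h4 : t*(c-t) < c^2 := by nlinarith [sq_nonneg (c - 2*t)]
  nlinarith [mul_lt_mul_of_pos_left h4 (sub_pos.2 htc)]

lemma gg_strict {c s t : ℝ} (hc : 0 < c) (ht : 0 ≤ t) (hst : t < s) :
    |gg c s - gg c t| < s - t := by
  have hs' : 0 < s := lt_of_le_of_lt ht hst
  rcases le_or_gt s c with hsc | hsc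
  · have htc : t ≤ c := le_trans hst.le hsc
    rw [gg_eq hsc, gg_eq htc, abs_lt, ← sub_div]
    constructor
    · rw [neg_lt, ← neg_div, div_lt_iff₀ (by positivity)]
      have h2 : 0 < (c-s)^2 + (c-t)^2 + s*t := by
        rcases eq_or_lt_of_le ht with h0 | h0
        · subst h0; nlinarith [sq_nonneg (c-s)]
        · nlinarith [sq_nonneg (c-s), sq_nonneg (c-t), mul_pos hs' h0]
      nlinarith [mul_pos (sub_pos.2 hst) h2]
    · rw [div_lt_iff₀ (by positivity)]
      have h2 : 0 < 2*c*(s+t) - (s^2+s*t+t^2) := by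
        nlinarith [mul_nonneg (sub_nonneg.2 hsc) hs'.le, mul_nonneg (sub_nonneg.2 hsc) ht,
          mul_nonneg (sub_nonneg.2 htc) ht, mul_pos hc hs']
      nlinarith [mul_pos (sub_pos.2 hst) h2]
  · rcases lt_or_ge t c with htc | htc
    · rw [gg_eq' hsc.le, zero_sub, abs_neg, abs_of_nonneg (gg_nonneg ht)]
      have := gg_lt_sub hc ht htc
      linarith
    · rw [gg_eq' hsc.le, gg_eq' htc]; simpa using sub_pos.2 hst

lemma gg_strict' {c s t : ℝ} (hc : 0 < c) (hs : 0 ≤ s) (ht : 0 ≤ t) (hst : s ≠ t) :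
    |gg c s - gg c t| < |s - t| := by
  rcases lt_or_gt_of_ne hst with h | h
  · rw [abs_sub_comm, show |s - t| = t - s by rw [abs_sub_comm, abs_of_pos (sub_pos.2 h)]]
    exact gg_strict hc hs h
  · rw [abs_of_pos (sub_pos.2 h)]; exact gg_strict hc ht h
end GG
namespace L1C
variable {M : Type*} [MetricSpace M]

noncomputable def ee (b : Bool) : ℝ := if b then 1 else -1

lemma abs_ee (b : Bool) : |ee b| = 1 := by cases b <;> simp [ee]

variable (P : (ℕ → Bool) → M) (c : ℝ)

open Classical in
noncomputable def Ffun (a : ℕ → ℝ) (x : M) : ℝ :=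
  if h : ∃ s, dist x (P s) < c then
    (∑' n, a n * ee (Classical.choose h n)) * gg c (dist x (P (Classical.choose h)))
  else 0

structure Setup (base : M) (P : (ℕ → Bool) → M) (c : ℝ) : Prop where
  hc : 0 < c
  hsep : ∀ s t, s ≠ t → 4*c ≤ dist (P s) (P t)
  hbase : ∀ s, 2*c ≤ dist (P s) base
  hacc : ∀ s, ∀ r > 0, ∃ q, q ≠ P s ∧ dist q (P s) < r

variable {P c} {base : M}

lemma Setup.uniq (h : Setup base P c) {x : M} {s t : ℕ → Bool}
    (hs : dist x (P s) < c) (ht : dist x (P t) < c) : s = t := by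
  by_contra hst
  have h1 := h.hsep s t hst
  have h2 : dist (P s) (P t) ≤ dist x (P s) + dist x (P t) := by
    rw [dist_comm x (P s)]; exact dist_triangle _ _ _
  linarith [h.hc]

lemma Ffun_eq (h : Setup base P c) {x : M} {s : ℕ → Bool} (hs : dist x (P s) < c) (a : ℕ → ℝ) :
    Ffun P c a x = (∑' n, a n * ee (s n)) * gg c (dist x (P s)) := by
  rw [Ffun, dif_pos ⟨s, hs⟩]
  have hch := Classical.choose_spec (⟨s, hs⟩ : ∃ s, dist x (P s) < c)
  rw [h.uniq hch hs]

lemma Ffun_not {x : M} (hx : ¬ ∃ s, dist x (P s) < c) (a : ℕ → ℝ) : Ffun P c a x = 0 :=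
  dif_neg hx

variable {a : ℕ → ℝ}

lemma summable_ee (ha : Summable fun n => |a n|) (s : ℕ → Bool) :
    Summable fun n => a n * ee (s n) := by
  apply Summable.of_norm
  have : (fun n => ‖a n * ee (s n)‖) = fun n => |a n| := by
    funext n; rw [Real.norm_eq_abs, abs_mul, abs_ee, mul_one]
  rw [this]; exact ha

lemma abs_A_le (ha : Summable fun n => |a n|) (s : ℕ → Bool) :
    |∑' n, a n * ee (s n)| ≤ ∑' n, |a n| := by
  have h1 : (fun n => ‖a n * ee (s n)‖) = fun n => |a n| := by
    funext n; rw [Real.norm_eq_abs, abs_mul, abs_ee, mul_one]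
  calc |∑' n, a n * ee (s n)| ≤ ∑' n, ‖a n * ee (s n)‖ :=
        norm_tsum_le_tsum_norm (by rw [h1]; exact ha)
    _ = ∑' n, |a n| := by rw [h1]

lemma habs_sub (u v : ℝ) : |u - v| ≤ |u| + |v| := by
  rw [sub_eq_add_neg]; exact (abs_add_le _ _).trans (by rw [abs_neg])

lemma key (h : Setup base P c) (ha : Summable fun n => |a n|) (x y : M) :
    ∃ G : ℝ, |Ffun P c a x - Ffun P c a y| ≤ (∑' n, |a n|) * G ∧ G ≤ dist x y ∧
      (x ≠ y → G < dist x y) := by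
  have hL0 : 0 ≤ ∑' n, |a n| := tsum_nonneg fun n => abs_nonneg _
  by_cases hx : ∃ s, dist x (P s) < c
  · obtain ⟨s, hs⟩ := hx
    by_cases hy : ∃ t, dist y (P t) < c
    · obtain ⟨t, ht⟩ := hy
      by_cases hst : s = t
      · subst hst
        rw [Ffun_eq h hs a, Ffun_eq h ht a]
        refine ⟨|gg c (dist x (P s)) - gg c (dist y (P s))|, ?_, ?_, ?_⟩
        · rw [← mul_sub, abs_mul]
          exact mul_le_mul_of_nonneg_right (abs_A_le ha s) (abs_nonneg _)
        · rcases eq_or_ne (dist x (P s)) (dist y (P s)) with he | he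
          · rw [he]; simpa using dist_nonneg
          · exact le_trans (gg_strict' h.hc dist_nonneg dist_nonneg he).le
              (abs_dist_sub_le _ _ _)
        · intro hxy
          rcases eq_or_ne (dist x (P s)) (dist y (P s)) with he | he
          · rw [he]; simpa using dist_pos.2 hxy
          · exact lt_of_lt_of_le (gg_strict' h.hc dist_nonneg dist_nonneg he)
              (abs_dist_sub_le _ _ _)
      · rw [Ffun_eq h hs a, Ffun_eq h ht a]
        have hgx := gg_le h.hc (dist_nonneg : (0:ℝ) ≤ dist x (P s))
        have hgy := gg_le h.hc (dist_nonneg : (0:ℝ) ≤ dist y (P t))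
        have hdist : gg c (dist x (P s)) + gg c (dist y (P t)) < dist x y := by
          have h1 : 4*c ≤ dist (P s) (P t) := h.hsep s t hst
          have h2 : dist (P s) (P t) ≤ dist x (P s) + dist x y + dist y (P t) := by
            calc dist (P s) (P t) ≤ dist (P s) x + dist x (P t) := dist_triangle _ _ _
              _ ≤ dist (P s) x + (dist x y + dist y (P t)) := by
                  linarith [dist_triangle x y (P t)]
              _ = dist x (P s) + dist x y + dist y (P t) := by rw [dist_comm (P s) x]; ring
          linarith
        refine ⟨gg c (dist x (P s)) + gg c (dist y (P t)), ?_, hdist.le, fun _ => hdist⟩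
        calc |(∑' n, a n * ee (s n)) * gg c (dist x (P s)) -
              (∑' n, a n * ee (t n)) * gg c (dist y (P t))|
            ≤ |(∑' n, a n * ee (s n)) * gg c (dist x (P s))| +
              |(∑' n, a n * ee (t n)) * gg c (dist y (P t))| := habs_sub _ _
          _ ≤ (∑' n, |a n|) * gg c (dist x (P s)) + (∑' n, |a n|) * gg c (dist y (P t)) := by
              rw [abs_mul, abs_mul, abs_of_nonneg (gg_nonneg dist_nonneg),
                abs_of_nonneg (gg_nonneg dist_nonneg)]
              exact add_le_add
                (mul_le_mul_of_nonneg_right (abs_A_le ha s) (gg_nonneg dist_nonneg))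
                (mul_le_mul_of_nonneg_right (abs_A_le ha t) (gg_nonneg dist_nonneg))
          _ = (∑' n, |a n|) * (gg c (dist x (P s)) + gg c (dist y (P t))) := by ring
    · rw [Ffun_eq h hs a, Ffun_not hy a, sub_zero, abs_mul]
      push_neg at hy
      have hcy : c ≤ dist y (P s) := hy s
      have hgd : gg c (dist x (P s)) < dist x y := by
        have h1 : c - dist x (P s) ≤ dist x y := by
          have h2 : dist y (P s) ≤ dist y x + dist x (P s) := dist_triangle _ _ _
          rw [dist_comm y x] at h2; linarith
        exact lt_of_lt_of_le (gg_lt_sub h.hc dist_nonneg hs) h1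
      refine ⟨gg c (dist x (P s)), ?_, hgd.le, fun _ => hgd⟩
      rw [abs_of_nonneg (gg_nonneg dist_nonneg)]
      exact mul_le_mul_of_nonneg_right (abs_A_le ha s) (gg_nonneg dist_nonneg)
  · by_cases hy : ∃ t, dist y (P t) < c
    · obtain ⟨t, ht⟩ := hy
      rw [Ffun_eq h ht a, Ffun_not hx a, zero_sub, abs_neg, abs_mul]
      push_neg at hx
      have hcx : c ≤ dist x (P t) := hx t
      have hgd : gg c (dist y (P t)) < dist x y := by
        have h1 : c - dist y (P t) ≤ dist x y := by
          have h2 : dist x (P t) ≤ dist x y + dist y (P t) := dist_triangle _ _ _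
          linarith
        exact lt_of_lt_of_le (gg_lt_sub h.hc dist_nonneg ht) h1
      refine ⟨gg c (dist y (P t)), ?_, hgd.le, fun _ => hgd⟩
      rw [abs_of_nonneg (gg_nonneg dist_nonneg)]
      exact mul_le_mul_of_nonneg_right (abs_A_le ha t) (gg_nonneg dist_nonneg)
    · exact ⟨0, by simp [Ffun_not hx a, Ffun_not hy a], dist_nonneg,
        fun hxy => dist_pos.2 hxy⟩

lemma key_le (h : Setup base P c) (ha : Summable fun n => |a n|) (x y : M) :
    |Ffun P c a x - Ffun P c a y| ≤ (∑' n, |a n|) * dist x y := by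
  have hL0 : 0 ≤ ∑' n, |a n| := tsum_nonneg fun n => abs_nonneg _
  obtain ⟨G, h1, h2, _⟩ := key h ha x y
  exact h1.trans (mul_le_mul_of_nonneg_left h2 hL0)

lemma key_lt (h : Setup base P c) (ha : Summable fun n => |a n|)
    (hL : 0 < ∑' n, |a n|) {x y : M} (hxy : x ≠ y) :
    |Ffun P c a x - Ffun P c a y| < (∑' n, |a n|) * dist x y := by
  obtain ⟨G, h1, _, h3⟩ := key h ha x y
  exact h1.trans_lt (mul_lt_mul_of_pos_left (h3 hxy) hL)


lemma csSup_eq_of {R : Set ℝ} {L : ℝ} (hne : R.Nonempty) (hub : ∀ r ∈ R, r ≤ L)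
    (hlb : ∀ ε > 0, ∃ r ∈ R, L - ε ≤ r) : sSup R = L := by
  refine le_antisymm (csSup_le hne hub) ?_
  by_contra hlt
  push_neg at hlt
  obtain ⟨r, hr, hrL⟩ := hlb ((L - sSup R)/2) (by linarith)
  have : r ≤ sSup R := le_csSup ⟨L, fun z hz => hub z hz⟩ hr
  linarith

lemma lp_summable (a : lp (fun _ : ℕ => ℝ) 1) : Summable fun n => |a n| := by
  have h := Memℓp.summable (by norm_num : 0 < (1 : ℝ≥0∞).toReal) (lp.memℓp a)
  simpa [Real.rpow_one, Real.norm_eq_abs] using h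

lemma lp_norm (a : lp (fun _ : ℕ => ℝ) 1) : ‖a‖ = ∑' n, |a n| := by
  rw [lp.norm_eq_tsum_rpow (by norm_num : 0 < (1 : ℝ≥0∞).toReal) a]
  simp [Real.rpow_one, Real.norm_eq_abs]

lemma A_sign (a : ℕ → ℝ) :
    (∑' n, a n * ee (decide (0 ≤ a n))) = ∑' n, |a n| := by
  apply tsum_congr
  intro n
  by_cases h : 0 ≤ a n
  · simp [ee, h, abs_of_nonneg h]
  · simp [ee, h, abs_of_neg (lt_of_not_ge h)]

lemma attain (h : Setup base P c) (ha : Summable fun n => |a n|) (s : ℕ → Bool)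
    (hAs : (∑' n, a n * ee (s n)) = ∑' n, |a n|) {ε : ℝ} (hε : 0 < ε) :
    ∃ q, q ≠ P s ∧ (∑' n, |a n|) - ε ≤ |Ffun P c a (P s) - Ffun P c a q| / dist (P s) q := by
  have hL0 : 0 ≤ ∑' n, |a n| := tsum_nonneg fun n => abs_nonneg _
  set L := ∑' n, |a n| with hLdef
  have hcpos := h.hc
  have hrpos : 0 < min c (ε * c / (2*L+1)) :=
    lt_min h.hc (div_pos (mul_pos hε hcpos) (by linarith))
  obtain ⟨q, hq, hqd⟩ := h.hacc s _ hrpos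
  have hd0 : 0 < dist q (P s) := dist_pos.2 hq
  have hdc : dist q (P s) < c := lt_of_lt_of_le hqd (min_le_left _ _)
  have hdε : dist q (P s) ≤ ε * c / (2*L+1) := (lt_of_lt_of_le hqd (min_le_right _ _)).le
  have hFq : Ffun P c a q = L * gg c (dist q (P s)) := by
    rw [Ffun_eq h hdc a, hAs]
  have hFp : Ffun P c a (P s) = 0 := by
    rw [Ffun_eq h (show dist (P s) (P s) < c by rw [dist_self]; exact h.hc) a, dist_self,
      gg_zero, mul_zero]
  refine ⟨q, hq, ?_⟩
  rw [hFp, hFq, zero_sub, abs_neg,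
    abs_of_nonneg (mul_nonneg hL0 (gg_nonneg hd0.le)), dist_comm (P s) q]
  have hc := h.hc
  set d := dist q (P s) with hddef
  rw [gg_eq hdc.le]
  have heq : L * (d * (c - d)^2 / c^2) / d = L * (c-d)^2 / c^2 := by
    field_simp
  rw [heq, le_div_iff₀ (by positivity : (0:ℝ) < c^2)]
  have h1 : L * d ≤ L * (ε * c/(2*L+1)) := mul_le_mul_of_nonneg_left hdε hL0
  have h2 : L*d*(2*c-d) ≤ (L*(ε*c/(2*L+1)))*(2*c) :=
    mul_le_mul h1 (by linarith) (by linarith) (by positivity)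
  have h3 : (L*(ε*c/(2*L+1)))*(2*c) ≤ ε * c^2 := by
    rw [show (L*(ε*c/(2*L+1)))*(2*c) = 2*L*(ε*c^2)/(2*L+1) by ring]
    rw [div_le_iff₀ (by positivity : (0:ℝ) < 2*L+1)]
    nlinarith [mul_nonneg (mul_nonneg hL0 hε.le) (sq_nonneg c)]
  nlinarith [h2, h3]

noncomputable def Tmap (P : (ℕ → Bool) → M) (c : ℝ) :
    lp (fun _ : ℕ => ℝ) 1 →ₗ[ℝ] (M → ℝ) where
  toFun a := Ffun P c (fun n => a n)
  map_add' a b := by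
    funext x
    show Ffun P c (fun n => (a + b) n) x
      = Ffun P c (fun n => a n) x + Ffun P c (fun n => b n) x
    by_cases hx : ∃ s, dist x (P s) < c
    · simp only [Ffun, dif_pos hx]
      have hab : ∀ n, (a + b) n = a n + b n := fun n => by
        rw [lp.coeFn_add]; rfl
      rw [show (fun n => (a + b) n * ee (Classical.choose hx n))
          = fun n => a n * ee (Classical.choose hx n) + b n * ee (Classical.choose hx n) by
        funext n; rw [hab n]; ring]
      rw [Summable.tsum_add (summable_ee (lp_summable a) _) (summable_ee (lp_summable b) _)]
      ring
    · simp only [Ffun, dif_neg hx]; ring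
  map_smul' r a := by
    funext x
    show Ffun P c (fun n => (r • a) n) x = r * Ffun P c (fun n => a n) x
    by_cases hx : ∃ s, dist x (P s) < c
    · simp only [Ffun, dif_pos hx]
      have hra : ∀ n, (r • a) n = r * a n := fun n => by rw [lp.coeFn_smul]; rfl
      rw [show (fun n => (r • a) n * ee (Classical.choose hx n))
          = fun n => r * (a n * ee (Classical.choose hx n)) by
        funext n; rw [hra n]; ring]
      rw [tsum_mul_left]; ring
    · simp only [Ffun, dif_neg hx]; ring

theorem construction [Nontrivial M] (h : Setup base P c) :
    ∃ T : lp (fun _ : ℕ => ℝ) 1 →ₗ[ℝ] (M → ℝ),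
      ∀ a : lp (fun _ : ℕ => ℝ) 1,
        MemLip0 base (T a) ∧ lipNorm (T a) = ‖a‖ ∧
        (a ≠ 0 → PointwiseAttains (T a) ∧ ¬ StronglyAttains (T a)) := by
  classical
  refine ⟨Tmap P c, fun a => ?_⟩
  have ha : Summable fun n => |a n| := lp_summable a
  have hnorm : ‖a‖ = ∑' n, |a n| := lp_norm a
  have hL0 : 0 ≤ ∑' n, |a n| := tsum_nonneg fun n => abs_nonneg _
  have hT : (Tmap P c) a = Ffun P c (fun n => a n) := rfl
  have hmem : MemLip0 base ((Tmap P c) a) := by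
    constructor
    · show Ffun P c (fun n => a n) base = 0
      apply Ffun_not
      rintro ⟨s, hs⟩
      rw [dist_comm] at hs
      have h1 := h.hbase s
      have h2 := h.hc
      linarith
    · refine ⟨⟨∑' n, |a n|, hL0⟩, LipschitzWith.of_dist_le_mul fun x y => ?_⟩
      rw [Real.dist_eq]
      exact key_le h ha x y
  set sa : ℕ → Bool := fun n => decide (0 ≤ a n) with hsa
  have hAs : (∑' n, a n * ee (sa n)) = ∑' n, |a n| := A_sign _
  have hub : ∀ p q : M, p ≠ q →
      |Ffun P c (fun n => a n) p - Ffun P c (fun n => a n) q| / dist p q ≤ ∑' n, |a n| := by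
    intro p q hpq
    rw [div_le_iff₀ (dist_pos.2 hpq)]
    exact key_le h ha p q
  have hlip : lipNorm ((Tmap P c) a) = ‖a‖ := by
    rw [hnorm, hT, lipNorm]
    apply csSup_eq_of
    · obtain ⟨x, y, hxy⟩ := exists_pair_ne M
      exact ⟨_, x, y, hxy, rfl⟩
    · rintro r ⟨p, q, hpq, rfl⟩
      exact hub p q hpq
    · intro ε hε
      obtain ⟨q, hq, hle⟩ := attain h ha sa hAs hε
      exact ⟨_, ⟨P sa, q, Ne.symm hq, rfl⟩, hle⟩
  refine ⟨hmem, hlip, fun ha0 => ?_⟩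
  have hLpos : 0 < ∑' n, |a n| := by
    rw [← hnorm]; exact norm_pos_iff.2 ha0
  constructor
  · refine ⟨P sa, ?_⟩
    rw [hlip, hnorm, hT]
    apply csSup_eq_of
    · obtain ⟨q, hq, _⟩ := h.hacc sa 1 one_pos
      exact ⟨_, q, hq, rfl⟩
    · rintro r ⟨q, hq, rfl⟩
      exact hub _ q (Ne.symm hq)
    · intro ε hε
      obtain ⟨q, hq, hle⟩ := attain h ha sa hAs hε
      exact ⟨_, ⟨q, hq, rfl⟩, hle⟩
  · rintro ⟨p, q, hpq, heq⟩
    rw [hlip, hnorm, hT] at heq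
    exact absurd heq (ne_of_lt (key_lt h ha hLpos hpq))

end L1C

/-- If the set of accumulation points of an infinite metric space `M` has density character
at least `2^ℵ₀`, then `(PNA(M) \ SNA(M)) ∪ {0}` contains an isometric copy of `ℓ₁`. -/
theorem l1_in_PNA_not_SNA {M : Type u} [MetricSpace M] [Infinite M] (base : M)
    (M' : Set M) (hM' : M' = {x : M | AccPt x (Filter.principal (Set.univ : Set M))})
    (hlow : ∀ D : Set M, D ⊆ M' → M' ⊆ closure D →
      Cardinal.continuum ≤ Cardinal.mk ↥D) :
    ∃ T : lp (fun _ : ℕ => ℝ) 1 →ₗ[ℝ] (M → ℝ),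
      ∀ a : lp (fun _ : ℕ => ℝ) 1,
        MemLip0 base (T a) ∧ lipNorm (T a) = ‖a‖ ∧
        (a ≠ 0 → PointwiseAttains (T a) ∧ ¬ StronglyAttains (T a)) := by
  classical
  -- Step 1: maximal (1/(n+1))-separated subsets of M'
  have hzorn : ∀ n : ℕ, ∃ D : Set M,
      (D ⊆ M' ∧ ∀ p ∈ D, ∀ q ∈ D, p ≠ q → 1/(n+1 : ℝ) ≤ dist p q) ∧
      ∀ E, (E ⊆ M' ∧ ∀ p ∈ E, ∀ q ∈ E, p ≠ q → 1/(n+1 : ℝ) ≤ dist p q) → D ⊆ E → E = D := by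
    intro n
    have hch : ∀ C ⊆ {A : Set M | A ⊆ M' ∧ ∀ p ∈ A, ∀ q ∈ A, p ≠ q → 1/(n+1:ℝ) ≤ dist p q},
        IsChain (· ⊆ ·) C → ∃ ub ∈ {A : Set M | A ⊆ M' ∧
          ∀ p ∈ A, ∀ q ∈ A, p ≠ q → 1/(n+1:ℝ) ≤ dist p q}, ∀ s ∈ C, s ⊆ ub := by
      intro C hC hchain
      refine ⟨⋃₀ C, ⟨?_, ?_⟩, fun s hs => subset_sUnion_of_mem hs⟩
      · rintro x ⟨A, hA, hxA⟩; exact (hC hA).1 hxA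
      · rintro p hp q hq hpq
        obtain ⟨A, hA, hpA⟩ := hp
        obtain ⟨B, hB, hqB⟩ := hq
        rcases eq_or_ne A B with rfl | hAB
        · exact (hC hA).2 p hpA q hqB hpq
        · rcases hchain hA hB hAB with hsub | hsub
          · exact (hC hB).2 p (hsub hpA) q hqB hpq
          · exact (hC hA).2 p hpA q (hsub hqB) hpq
    obtain ⟨m, hm⟩ := zorn_subset _ hch
    exact ⟨m, hm.prop, fun E hE hDE => subset_antisymm (hm.2 hE hDE) hDE⟩
  choose D hD hDmax using hzorn
  -- Step 2: density of the union
  have hdense : M' ⊆ closure (⋃ n, D n) := by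
    intro x hx
    rw [Metric.mem_closure_iff]
    intro ε hε
    obtain ⟨n, hn⟩ := exists_nat_one_div_lt hε
    have hpos : (0:ℝ) < 1/(n+1 : ℝ) := by positivity
    have hex : ∃ d ∈ D n, dist x d < 1/(n+1 : ℝ) := by
      by_contra hcon
      push_neg at hcon
      have hxD : x ∉ D n := by
        intro hxD
        have := hcon x hxD
        rw [dist_self] at this
        linarith
      have hins : (insert x (D n)) ⊆ M' ∧
          ∀ p ∈ insert x (D n), ∀ q ∈ insert x (D n), p ≠ q → 1/(n+1:ℝ) ≤ dist p q := by
        constructor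
        · rintro y (rfl | hy)
          · exact hx
          · exact (hD n).1 hy
        · rintro p (rfl | hp) q (rfl | hq) hpq
          · exact absurd rfl hpq
          · exact hcon q hq
          · rw [dist_comm]; exact hcon p hp
          · exact (hD n).2 p hp q hq hpq
      have heq := hDmax n _ hins (subset_insert x (D n))
      rw [← heq] at hxD
      exact hxD (mem_insert _ _)
    obtain ⟨d, hd, hdd⟩ := hex
    exact ⟨d, mem_iUnion.2 ⟨n, hd⟩, lt_trans hdd hn⟩
  -- Step 3: cardinality: some D n has size ≥ continuum
  have hcard : ∃ n : ℕ, Cardinal.continuum ≤ Cardinal.mk (D n) := by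
    by_contra hcon
    push_neg at hcon
    have hU : Cardinal.continuum ≤ Cardinal.mk ↥(⋃ n, D n) :=
      hlow _ (iUnion_subset fun n => (hD n).1) hdense
    have hre : (⋃ n : ℕ, D n) = ⋃ i : ULift.{u} ℕ, D i.down := by
      ext x
      constructor
      · rintro hx
        obtain ⟨n, hn⟩ := mem_iUnion.1 hx
        exact mem_iUnion.2 ⟨ULift.up n, hn⟩
      · rintro hx
        obtain ⟨i, hi⟩ := mem_iUnion.1 hx
        exact mem_iUnion.2 ⟨i.down, hi⟩
    rw [hre] at hU
    have h1 := Cardinal.mk_iUnion_le (fun i : ULift.{u} ℕ => D i.down)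
    have hmkU : Cardinal.mk (ULift.{u} ℕ) = Cardinal.aleph0 := by
      rw [Cardinal.mk_uLift, Cardinal.mk_nat, Cardinal.lift_aleph0]
    have hcof : Cardinal.aleph0 < (Cardinal.continuum.{u}).ord.cof := by
      by_contra hc
      push_neg at hc
      have hk := Cardinal.lt_power_cof Cardinal.aleph0_le_continuum
      have h2 : (Cardinal.continuum.{u}) ^ (Cardinal.continuum.{u}).ord.cof
          ≤ Cardinal.continuum.{u} ^ Cardinal.aleph0.{u} :=
        Cardinal.power_le_power_left Cardinal.continuum_ne_zero hc
      rw [Cardinal.continuum_power_aleph0] at h2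
      exact absurd (hk.trans_le h2) (lt_irrefl _)
    have hsup : (⨆ i : ULift.{u} ℕ, Cardinal.mk (D i.down)) < Cardinal.continuum := by
      exact Ordinal.iSup_lt (f := fun i : ULift.{u} ℕ => Cardinal.mk (D i.down))
        (by rw [hmkU]; exact hcof) (fun i => hcon i.down)
    have hmul : Cardinal.mk (ULift.{u} ℕ) * (⨆ i : ULift.{u} ℕ, Cardinal.mk (D i.down))
        < Cardinal.continuum := by
      refine lt_of_le_of_lt (Cardinal.mul_le_max _ _) ?_
      apply max_lt (max_lt ?_ hsup) ?_
      · rw [hmkU]; exact Cardinal.aleph0_lt_continuum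
      · exact Cardinal.aleph0_lt_continuum
    exact absurd (hU.trans h1) (not_le.2 hmul)
  obtain ⟨n, hn⟩ := hcard
  set δ : ℝ := 1/(n+1 : ℝ) with hδdef
  have hδ : 0 < δ := by positivity
  have hDsub : D n ⊆ M' := (hD n).1
  have hDsep : ∀ p ∈ D n, ∀ q ∈ D n, p ≠ q → δ ≤ dist p q := (hD n).2
  -- Step 4: embedding of the Cantor set of sign patterns
  have hemb : Nonempty ((ℕ → Bool) ↪ ↥(D n)) := by
    rw [← Cardinal.lift_mk_le']
    have h1 : Cardinal.mk (ℕ → Bool) = Cardinal.continuum.{0} := by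
      rw [← Cardinal.power_def Bool ℕ, Cardinal.mk_bool, Cardinal.mk_nat,
        Cardinal.two_power_aleph0]
    rw [h1, Cardinal.lift_continuum, Cardinal.lift_uzero]
    exact hn
  obtain ⟨Θ⟩ := hemb
  -- accumulation points
  have hacc' : ∀ x ∈ M', ∀ r > 0, ∃ q, q ≠ x ∧ dist q x < r := by
    intro x hx r hr
    rw [hM'] at hx
    have hx' : AccPt x (Filter.principal (Set.univ : Set M)) := hx
    obtain ⟨y, hy, hyx⟩ := accPt_iff_nhds.1 hx' (Metric.ball x r)
      (Metric.ball_mem_nhds x hr)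
    exact ⟨y, hyx, Metric.mem_ball.1 hy.1⟩
  -- Step 5: build the family of centers avoiding the base point
  have hP : ∃ P : (ℕ → Bool) → M,
      (∀ s t, s ≠ t → δ ≤ dist (P s) (P t)) ∧
      (∀ s, δ/2 ≤ dist (P s) base) ∧ (∀ s, P s ∈ M') := by
    by_cases hb : ∃ s : ℕ → Bool, dist (↑(Θ s) : M) base < δ/2
    · obtain ⟨s₀, hs₀⟩ := hb
      set j : (ℕ → Bool) → (ℕ → Bool) :=
        fun s n => if n = 0 then !(s₀ 0) else s (n-1) with hj
      have hjinj : Function.Injective j := by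
        intro s t hst
        funext m
        have := congrFun hst (m+1)
        simpa [hj] using this
      have hjne : ∀ s, j s ≠ s₀ := by
        intro s he
        have := congrFun he 0
        simp [hj] at this
      refine ⟨fun s => ↑(Θ (j s)), ?_, ?_, fun s => hDsub (Θ (j s)).2⟩
      · intro s t hst
        exact hDsep _ (Θ (j s)).2 _ (Θ (j t)).2
          (Subtype.coe_injective.ne (Θ.injective.ne (hjinj.ne hst)))
      · intro s
        by_contra hlt
        push_neg at hlt
        have hne : (↑(Θ (j s)) : M) ≠ ↑(Θ s₀) :=
          Subtype.coe_injective.ne (Θ.injective.ne (hjne s))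
        have h1 := hDsep _ (Θ (j s)).2 _ (Θ s₀).2 hne
        have h2 : dist (↑(Θ (j s)) : M) ↑(Θ s₀) ≤ dist (↑(Θ (j s)) : M) base
            + dist (↑(Θ s₀) : M) base := by
          rw [dist_comm (↑(Θ s₀) : M) base]
          exact dist_triangle _ _ _
        linarith
    · push_neg at hb
      exact ⟨fun s => ↑(Θ s), fun s t hst =>
        hDsep _ (Θ s).2 _ (Θ t).2 (Subtype.coe_injective.ne (Θ.injective.ne hst)),
        hb, fun s => hDsub (Θ s).2⟩
  obtain ⟨P, hPsep, hPbase, hPM'⟩ := hP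
  have hsetup : L1C.Setup base P (δ/4) := by
    refine ⟨by linarith, ?_, ?_, ?_⟩
    · intro s t hst
      have := hPsep s t hst
      linarith
    · intro s
      have := hPbase s
      linarith
    · intro s r hr
      exact hacc' (P s) (hPM' s) r hr
  exact L1C.construction hsetup
end

section
/- Let M be an infinite pointed metric space and suppose there is a sequence (f_n) in Lip₀(M) such that: (a1) the supports {x : f_n(x) ≠ 0} are pairwise disjoint; and (a2′) for every bounded real sequence a = (a_n), the series Σ_n a_n f_n converges pointwise to a function f^(a) ∈ Lip₀(M) with ‖f^(a)‖ = ‖a‖_∞, and f^(a) strongly attains its norm if and only if there exists n₀ with |a_{n₀}| = ‖a‖_∞. Then neither SNA(M) nor (Lip₀(M) \ SNA(M)) ∪ {0} is a linear subspace of Lip₀(M); concretely, there exist f, g ∈ SNA(M) with f + g ∉ SNA(M), and there exist f′, g′ ∈ Lip₀(M) \ SNA(M) with f′ − g′ ∈ SNA(M) and f′ − g′ ≠ 0. -/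
open Filter Set
open scoped ZeroAtInfty ENNReal NNReal

private lemma aux_s_nonneg (n : ℕ) : 0 ≤ (n : ℝ) / ((n : ℝ) + 1) := by positivity

private lemma aux_s_lt_one (n : ℕ) : (n : ℝ) / ((n : ℝ) + 1) < 1 := by
  rw [div_lt_one (by positivity)]; linarith

private lemma aux_sup_ge_one {t : ℝ} (h : ∀ n : ℕ, (n : ℝ) / ((n : ℝ) + 1) ≤ t) : 1 ≤ t := by
  by_contra hlt
  push_neg at hlt
  obtain ⟨n, hn⟩ := exists_nat_gt (1 / (1 - t))
  have h1t : 0 < 1 - t := by linarith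
  have hn1 : (0 : ℝ) < (n : ℝ) + 1 := by positivity
  have h1 := (div_le_iff₀ hn1).mp (h n)
  have h2 : 1 < (n : ℝ) * (1 - t) := (div_lt_iff₀ h1t).mp hn
  nlinarith

private def mkLp (a : ℕ → ℝ) {C : ℝ} (h : ∀ n, |a n| ≤ C) : lp (fun _ : ℕ => ℝ) ⊤ :=
  ⟨a, memℓp_infty ⟨C, by
    rintro r ⟨n, rfl⟩
    exact le_trans (le_of_eq (Real.norm_eq_abs (a n))) (h n)⟩⟩

private lemma mkLp_apply (a : ℕ → ℝ) {C : ℝ} (h : ∀ n, |a n| ≤ C) (n : ℕ) :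
    (mkLp a h : ∀ _ : ℕ, ℝ) n = a n := rfl

private lemma lp_coord_le (A : lp (fun _ : ℕ => ℝ) ⊤) (n : ℕ) : |A n| ≤ ‖A‖ := by
  have := lp.norm_apply_le_norm ENNReal.top_ne_zero A n
  rwa [Real.norm_eq_abs] at this

private lemma lp_norm_le (A : lp (fun _ : ℕ => ℝ) ⊤) {C : ℝ} (hC : 0 ≤ C)
    (h : ∀ n, |A n| ≤ C) : ‖A‖ ≤ C :=
  lp.norm_le_of_forall_le hC fun n => le_trans (le_of_eq (Real.norm_eq_abs (A n))) (h n)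

private lemma lipNorm_zero_fun {M : Type*} [MetricSpace M] [Nontrivial M] :
    lipNorm (0 : M → ℝ) = 0 := by
  have hset : {r : ℝ | ∃ p q : M, p ≠ q ∧ r = |(0 : M → ℝ) p - (0 : M → ℝ) q| / dist p q}
      = {0} := by
    ext r
    simp only [Set.mem_setOf_eq, Pi.zero_apply, sub_zero, abs_zero, zero_div,
      Set.mem_singleton_iff]
    constructor
    · rintro ⟨p, q, -, rfl⟩; rfl
    · rintro rfl
      obtain ⟨p, q, hpq⟩ := exists_pair_ne M
      exact ⟨p, q, hpq, rfl⟩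
  rw [lipNorm, hset, csSup_singleton]

/-- If `SNA(M)` contains an isometric copy of `c₀` with a disjointly supported basis
`(f_n)` satisfying (a1) and (a2′), then neither `SNA(M)` nor its complement (with `0`)
is a linear subspace of `Lip₀(M)`. -/
theorem SNA_and_complement_not_linear_of_basis {M : Type*} [MetricSpace M] [Infinite M]
    (base : M) (f : ℕ → M → ℝ) (hf : ∀ n, MemLip0 base (f n))
    (hdisj : ∀ n m, n ≠ m → ∀ x : M, f n x = 0 ∨ f m x = 0)
    (ha2 : ∀ a : lp (fun _ : ℕ => ℝ) ⊤,
      (∀ x : M, Summable (fun n => a n * f n x)) ∧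
      MemLip0 base (fun x => ∑' n, a n * f n x) ∧
      lipNorm (fun x => ∑' n, a n * f n x) = ‖a‖ ∧
      (StronglyAttains (fun x => ∑' n, a n * f n x) ↔ ∃ n₀ : ℕ, |a n₀| = ‖a‖)) :
    (∃ u v : M → ℝ, MemLip0 base u ∧ MemLip0 base v ∧
      StronglyAttains u ∧ StronglyAttains v ∧
      ¬ StronglyAttains (fun x => u x + v x)) ∧
    (∃ u v : M → ℝ, MemLip0 base u ∧ MemLip0 base v ∧
      ¬ StronglyAttains u ∧ ¬ StronglyAttains v ∧
      StronglyAttains (fun x => u x - v x) ∧ (fun x => u x - v x) ≠ 0) := by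
  classical
  set s : ℕ → ℝ := fun n => (n : ℝ) / ((n : ℝ) + 1) with hs_def
  have hs0 : ∀ n, 0 ≤ s n := aux_s_nonneg
  have hs1 : ∀ n, s n < 1 := aux_s_lt_one
  constructor
  · -- Part 1 : SNA is not closed under addition
    set a : ℕ → ℝ := fun n => if n = 0 then 2 else s n with ha_def
    set b : ℕ → ℝ := fun n => if n = 0 then -2 else s n with hb_def
    have haub : ∀ n, |a n| ≤ 2 := by
      intro n
      by_cases h : n = 0
      · simp [ha_def, h]
      · simp only [ha_def, h, if_false]
        rw [abs_of_nonneg (hs0 n)]; linarith [hs1 n]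
    have hbub : ∀ n, |b n| ≤ 2 := by
      intro n
      by_cases h : n = 0
      · simp [hb_def, h]
      · simp only [hb_def, h, if_false]
        rw [abs_of_nonneg (hs0 n)]; linarith [hs1 n]
    set A := mkLp a haub with hA_def
    set B := mkLp b hbub with hB_def
    obtain ⟨hsumA, hlipA, hnormA, hattA⟩ := ha2 A
    obtain ⟨hsumB, hlipB, hnormB, hattB⟩ := ha2 B
    set C := A + B with hC_def
    obtain ⟨hsumC, hlipC, hnormC, hattC⟩ := ha2 C
    have hCcoe : ∀ n, (C : ∀ _ : ℕ, ℝ) n = a n + b n := by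
      intro n
      rw [hC_def, lp.coeFn_add]
      rfl
    -- norm of A equals 2
    have hnA : ‖A‖ = 2 := by
      refine le_antisymm (lp_norm_le A (by norm_num) ?_) ?_
      · intro n; exact haub n
      · have := lp_coord_le A 0
        have h0 : (A : ∀ _ : ℕ, ℝ) 0 = 2 := rfl
        rw [h0, abs_of_nonneg (by norm_num : (0:ℝ) ≤ 2)] at this; exact this
    have hnB : ‖B‖ = 2 := by
      refine le_antisymm (lp_norm_le B (by norm_num) ?_) ?_
      · intro n; exact hbub n
      · have := lp_coord_le B 0
        have h0 : (B : ∀ _ : ℕ, ℝ) 0 = -2 := rfl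
        rw [h0, abs_neg, abs_of_nonneg (by norm_num : (0:ℝ) ≤ 2)] at this; exact this
    -- norm of C equals 2, but coordinates never reach it
    have hCub : ∀ n, |(C : ∀ _ : ℕ, ℝ) n| ≤ 2 := by
      intro n
      rw [hCcoe n]
      by_cases h : n = 0
      · simp [ha_def, hb_def, h]
      · simp only [ha_def, hb_def, h, if_false]
        rw [abs_of_nonneg (by linarith [hs0 n])]
        linarith [hs1 n]
    have hnC : ‖C‖ = 2 := by
      refine le_antisymm (lp_norm_le C (by norm_num) hCub) ?_
      have key : ∀ n : ℕ, s n ≤ ‖C‖ / 2 := by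
        intro n
        rcases Nat.eq_zero_or_pos n with h | h
        · subst h
          simp only [hs_def, Nat.cast_zero, zero_div]
          positivity
        · have hne : n ≠ 0 := h.ne'
          have := lp_coord_le C n
          rw [hCcoe n] at this
          simp only [ha_def, hb_def, hne, if_false] at this
          rw [abs_of_nonneg (by linarith [hs0 n])] at this
          linarith
      have := aux_sup_ge_one key
      linarith
    refine ⟨_, _, hlipA, hlipB, hattA.mpr ⟨0, ?_⟩, hattB.mpr ⟨0, ?_⟩, ?_⟩
    · have h0 : (A : ∀ _ : ℕ, ℝ) 0 = 2 := rfl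
      rw [h0, hnA]; norm_num
    · have h0 : (B : ∀ _ : ℕ, ℝ) 0 = -2 := rfl
      rw [h0, hnB]; norm_num
    · -- the sum does not strongly attain
      have hfun : (fun x => (fun x => ∑' n, (A : ∀ _ : ℕ, ℝ) n * f n x) x
          + (fun x => ∑' n, (B : ∀ _ : ℕ, ℝ) n * f n x) x)
          = fun x => ∑' n, (C : ∀ _ : ℕ, ℝ) n * f n x := by
        funext x
        simp only
        rw [← Summable.tsum_add (hsumA x) (hsumB x)]
        exact tsum_congr fun n => by
          rw [hCcoe n]
          show (mkLp a haub : ∀ _ : ℕ, ℝ) n * f n x + (mkLp b hbub : ∀ _ : ℕ, ℝ) n * f n x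
            = (a n + b n) * f n x
          rw [mkLp_apply, mkLp_apply]; ring
      rw [hfun, hattC, hnC]
      rintro ⟨n, hn⟩
      rw [hCcoe n] at hn
      by_cases h : n = 0
      · simp [ha_def, hb_def, h] at hn
      · simp only [ha_def, hb_def, h, if_false] at hn
        rw [abs_of_nonneg (by linarith [hs0 n])] at hn
        linarith [hs1 n]
  · -- Part 2 : the complement of SNA is not closed under subtraction
    set d : ℕ → ℝ := fun n => if n = 0 then -(1 / 2) else s n with hd_def
    have hcub : ∀ n, |s n| ≤ 1 := fun n => by
      rw [abs_of_nonneg (hs0 n)]; exact (hs1 n).le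
    have hdub : ∀ n, |d n| ≤ 1 := by
      intro n
      by_cases h : n = 0
      · subst h
        show |(-(1 / 2) : ℝ)| ≤ 1
        rw [abs_neg, abs_of_nonneg (by norm_num : (0:ℝ) ≤ 1 / 2)]; norm_num
      · simp only [hd_def, h, if_false]
        rw [abs_of_nonneg (hs0 n)]; exact (hs1 n).le
    set Cc := mkLp s hcub with hCc_def
    set D := mkLp d hdub with hD_def
    obtain ⟨hsumC, hlipC, hnormC, hattC⟩ := ha2 Cc
    obtain ⟨hsumD, hlipD, hnormD, hattD⟩ := ha2 D
    set E := Cc - D with hE_def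
    obtain ⟨hsumE, hlipE, hnormE, hattE⟩ := ha2 E
    have hEcoe : ∀ n, (E : ∀ _ : ℕ, ℝ) n = s n - d n := by
      intro n
      rw [hE_def, lp.coeFn_sub]
      rfl
    have hEval : ∀ n, (E : ∀ _ : ℕ, ℝ) n = if n = 0 then (1 / 2 : ℝ) else 0 := by
      intro n
      rw [hEcoe n]
      by_cases h : n = 0
      · subst h
        show s 0 - -(1 / 2) = 1 / 2
        have : s 0 = 0 := by simp [hs_def]
        rw [this]; norm_num
      · simp only [hd_def, h, if_false, if_neg h]
        ring
    -- norms
    have hnCc : ‖Cc‖ = 1 := by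
      refine le_antisymm (lp_norm_le Cc (by norm_num) hcub) ?_
      refine aux_sup_ge_one fun n => ?_
      have := lp_coord_le Cc n
      rwa [show (Cc : ∀ _ : ℕ, ℝ) n = s n from rfl, abs_of_nonneg (hs0 n)] at this
    have hnD : ‖D‖ = 1 := by
      refine le_antisymm (lp_norm_le D (by norm_num) hdub) ?_
      refine aux_sup_ge_one fun n => ?_
      rcases Nat.eq_zero_or_pos n with h | h
      · subst h
        simp only [hs_def, Nat.cast_zero, zero_div]
        positivity
      · have hne : n ≠ 0 := h.ne'
        have := lp_coord_le D n
        simp only [show (D : ∀ _ : ℕ, ℝ) n = d n from rfl, hd_def, hne, if_false] at this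
        rwa [abs_of_nonneg (hs0 n)] at this
    have hnE : ‖E‖ = 1 / 2 := by
      refine le_antisymm (lp_norm_le E (by norm_num) ?_) ?_
      · intro n
        rw [hEval n]
        by_cases h : n = 0
        · rw [if_pos h, abs_of_nonneg (by norm_num : (0:ℝ) ≤ 1 / 2)]
        · rw [if_neg h, abs_zero]; norm_num
      · have := lp_coord_le E 0
        rw [hEval 0, if_pos rfl, abs_of_nonneg (by norm_num : (0:ℝ) ≤ 1 / 2)] at this
        exact this
    refine ⟨_, _, hlipC, hlipD, ?_, ?_, ?_, ?_⟩
    · rw [hattC, hnCc]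
      rintro ⟨n, hn⟩
      rw [show (Cc : ∀ _ : ℕ, ℝ) n = s n from rfl, abs_of_nonneg (hs0 n)] at hn
      exact absurd hn (hs1 n).ne
    · rw [hattD, hnD]
      rintro ⟨n, hn⟩
      by_cases h : n = 0
      · subst h
        rw [show (D : ∀ _ : ℕ, ℝ) 0 = -(1 / 2) from rfl, abs_neg,
          abs_of_nonneg (by norm_num : (0:ℝ) ≤ 1 / 2)] at hn
        norm_num at hn
      · simp only [show (D : ∀ _ : ℕ, ℝ) n = d n from rfl, hd_def, h, if_false] at hn
        rw [abs_of_nonneg (hs0 n)] at hn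
        exact absurd hn (hs1 n).ne
    · -- the difference strongly attains
      have hfun : (fun x => (fun x => ∑' n, (Cc : ∀ _ : ℕ, ℝ) n * f n x) x
          - (fun x => ∑' n, (D : ∀ _ : ℕ, ℝ) n * f n x) x)
          = fun x => ∑' n, (E : ∀ _ : ℕ, ℝ) n * f n x := by
        funext x
        simp only
        rw [← Summable.tsum_sub (hsumC x) (hsumD x)]
        exact tsum_congr fun n => by
          rw [hEcoe n]
          show s n * f n x - d n * f n x = (s n - d n) * f n x
          ring
      rw [hfun, hattE]
      refine ⟨0, ?_⟩
      rw [hEval 0, hnE, if_pos rfl, abs_of_nonneg (by norm_num : (0:ℝ) ≤ 1 / 2)]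
    · -- the difference is nonzero
      have hfun : (fun x => (fun x => ∑' n, (Cc : ∀ _ : ℕ, ℝ) n * f n x) x
          - (fun x => ∑' n, (D : ∀ _ : ℕ, ℝ) n * f n x) x)
          = fun x => ∑' n, (E : ∀ _ : ℕ, ℝ) n * f n x := by
        funext x
        simp only
        rw [← Summable.tsum_sub (hsumC x) (hsumD x)]
        exact tsum_congr fun n => by
          rw [hEcoe n]
          show s n * f n x - d n * f n x = (s n - d n) * f n x
          ring
      rw [hfun]
      intro h0
      have : lipNorm (fun x => ∑' n, (E : ∀ _ : ℕ, ℝ) n * f n x) = 0 := by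
        rw [h0]; exact lipNorm_zero_fun
      rw [hnormE, hnE] at this
      norm_num at this
end

section
/- Let M be an infinite pointed metric space such that PNA(M) \ SNA(M) is non-empty, i.e., there exists a Lipschitz function vanishing at the base point that attains its pointwise norm but does not strongly attain its norm. Then (Lip₀(M) \ SNA(M)) ∪ {0} is not a linear subspace of Lip₀(M): there exist f, g ∈ Lip₀(M) \ SNA(M) such that f − g ∈ SNA(M) and f − g ≠ 0. -/
open Filter Set
open scoped ZeroAtInfty ENNReal NNReal

section Aux

variable {M : Type*} [MetricSpace M]

lemma slope_bddAbove {f : M → ℝ} {K : ℝ≥0} (hK : LipschitzWith K f) :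
    BddAbove {r : ℝ | ∃ p q : M, p ≠ q ∧ r = |f p - f q| / dist p q} := by
  refine ⟨K, ?_⟩
  rintro r ⟨p, q, hpq, rfl⟩
  have hd : (0 : ℝ) < dist p q := dist_pos.mpr hpq
  rw [div_le_iff₀ hd]
  have := hK.dist_le_mul p q
  rwa [Real.dist_eq] at this

lemma slope_le_lipNorm {f : M → ℝ} {K : ℝ≥0} (hK : LipschitzWith K f)
    {p q : M} (hpq : p ≠ q) : |f p - f q| / dist p q ≤ lipNorm f :=
  le_csSup (slope_bddAbove hK) ⟨p, q, hpq, rfl⟩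

lemma abs_sub_le_lipNorm {f : M → ℝ} {K : ℝ≥0} (hK : LipschitzWith K f)
    (p q : M) : |f p - f q| ≤ lipNorm f * dist p q := by
  rcases eq_or_ne p q with rfl | hpq
  · simp
  · have hd : (0 : ℝ) < dist p q := dist_pos.mpr hpq
    have := slope_le_lipNorm hK hpq
    rw [div_le_iff₀ hd] at this
    linarith

lemma lipNorm_nonneg [Infinite M] {f : M → ℝ} {K : ℝ≥0} (hK : LipschitzWith K f) :
    0 ≤ lipNorm f := by
  obtain ⟨p, q, hpq⟩ := exists_pair_ne M
  have h1 : |f p - f q| / dist p q ≤ lipNorm f := slope_le_lipNorm hK hpq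
  have h0 : (0 : ℝ) ≤ |f p - f q| / dist p q := div_nonneg (abs_nonneg _) dist_nonneg
  linarith

lemma lipNorm_neg (f : M → ℝ) : lipNorm (fun x => -f x) = lipNorm f := by
  unfold lipNorm
  congr 1
  ext r
  constructor
  · rintro ⟨p, q, hpq, rfl⟩
    exact ⟨p, q, hpq, by rw [show -f p - -f q = -(f p - f q) by ring, abs_neg]⟩
  · rintro ⟨p, q, hpq, rfl⟩
    exact ⟨p, q, hpq, by rw [show -f p - -f q = -(f p - f q) by ring, abs_neg]⟩

lemma stronglyAttains_neg {f : M → ℝ} (h : StronglyAttains fun x => -f x) :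
    StronglyAttains f := by
  obtain ⟨p, q, hpq, heq⟩ := h
  refine ⟨p, q, hpq, ?_⟩
  rw [lipNorm_neg] at heq
  rwa [show -f p - -f q = -(f p - f q) by ring, abs_neg] at heq

/-- The key construction: if `f ∈ Lip₀`, `f ∉ SNA`, and the slopes of `f` at `p`
(in the positive direction) approach `lipNorm f`, then `g := f + (dist · p - c)`
works. -/
lemma key_construction [Infinite M] (base : M) (f : M → ℝ) (hf0 : f base = 0)
    (K : ℝ≥0) (hK : LipschitzWith K f) (hns : ¬ StronglyAttains f) (p : M)
    (happ : ∀ δ : ℝ, 0 < δ → ∃ q : M, q ≠ p ∧ lipNorm f - δ < (f q - f p) / dist q p) :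
    ∃ f g : M → ℝ, MemLip0 base f ∧ MemLip0 base g ∧
      ¬ StronglyAttains f ∧ ¬ StronglyAttains g ∧
      StronglyAttains (fun x => f x - g x) ∧ (fun x => f x - g x) ≠ 0 := by
  set L := lipNorm f with hL
  have hL0 : 0 ≤ L := lipNorm_nonneg hK
  set g : M → ℝ := fun x => f x + (dist x p - dist base p) with hg
  -- g is Lipschitz with constant K + 1
  have hgLip : LipschitzWith (K + 1) g := by
    have h1 : LipschitzWith 1 (fun x : M => dist x p - dist base p) :=
      LipschitzWith.of_dist_le_mul (fun x y => by
        rw [Real.dist_eq]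
        have : |dist x p - dist y p| ≤ dist x y := abs_dist_sub_le x y p
        simpa using this)
    exact hK.add h1
  -- Slopes of g are bounded above by L + 1
  have hgslope : ∀ x y : M, |g x - g y| ≤ (L + 1) * dist x y := by
    intro x y
    have h1 : |f x - f y| ≤ L * dist x y := abs_sub_le_lipNorm hK x y
    have h2 : |dist x p - dist y p| ≤ dist x y := abs_dist_sub_le x y p
    have h3 : g x - g y = (f x - f y) + (dist x p - dist y p) := by
      simp only [hg]; ring
    calc |g x - g y| ≤ |f x - f y| + |dist x p - dist y p| := by
          rw [h3]; exact abs_add_le _ _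
      _ ≤ L * dist x y + dist x y := by linarith
      _ = (L + 1) * dist x y := by ring
  have hgBdd : BddAbove {r : ℝ | ∃ x y : M, x ≠ y ∧ r = |g x - g y| / dist x y} := by
    refine ⟨L + 1, ?_⟩
    rintro r ⟨x, y, hxy, rfl⟩
    have hd : (0 : ℝ) < dist x y := dist_pos.mpr hxy
    rw [div_le_iff₀ hd]
    exact hgslope x y
  have hgne : {r : ℝ | ∃ x y : M, x ≠ y ∧ r = |g x - g y| / dist x y}.Nonempty := by
    obtain ⟨x, y, hxy⟩ := exists_pair_ne M
    exact ⟨_, x, y, hxy, rfl⟩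
  -- lipNorm g = L + 1
  have hgub : lipNorm g ≤ L + 1 := by
    apply csSup_le hgne
    rintro r ⟨x, y, hxy, rfl⟩
    have hd : (0 : ℝ) < dist x y := dist_pos.mpr hxy
    rw [div_le_iff₀ hd]
    exact hgslope x y
  have hglb : L + 1 ≤ lipNorm g := by
    by_contra hlt
    push_neg at hlt
    obtain ⟨q, hqp, hq⟩ := happ (L + 1 - lipNorm g) (by linarith)
    have hd : (0 : ℝ) < dist q p := dist_pos.mpr hqp
    have hgq : (g q - g p) / dist q p = (f q - f p) / dist q p + 1 := by
      have h4 : g q - g p = (f q - f p) + dist q p := by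
        simp only [hg, dist_self]; ring
      rw [h4, add_div, div_self (ne_of_gt hd)]
    have hmem : |g q - g p| / dist q p ≤ lipNorm g :=
      le_csSup hgBdd ⟨q, p, hqp, rfl⟩
    have h1 : (g q - g p) / dist q p ≤ |g q - g p| / dist q p :=
      div_le_div_of_nonneg_right (le_abs_self _) hd.le
    linarith
  have hgnorm : lipNorm g = L + 1 := le_antisymm hgub hglb
  -- g does not strongly attain
  have hgns : ¬ StronglyAttains g := by
    rintro ⟨x, y, hxy, heq⟩
    rw [hgnorm] at heq
    have hd : (0 : ℝ) < dist x y := dist_pos.mpr hxy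
    have h1 : |f x - f y| ≤ L * dist x y := abs_sub_le_lipNorm hK x y
    have h2 : |dist x p - dist y p| ≤ dist x y := abs_dist_sub_le x y p
    have h3 : g x - g y = (f x - f y) + (dist x p - dist y p) := by
      simp only [hg]; ring
    have h4 : |g x - g y| ≤ |f x - f y| + |dist x p - dist y p| := by
      rw [h3]; exact abs_add_le _ _
    have h5 : L * dist x y ≤ |f x - f y| := by linarith
    exact hns ⟨x, y, hxy, le_antisymm h1 h5⟩
  -- f - g = fun x => dist base p - dist x p
  have hdiff : (fun x => f x - g x) = fun x => dist base p - dist x p := by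
    funext x; simp only [hg]; ring
  -- the difference strongly attains
  obtain ⟨q, hqp⟩ := exists_ne p
  set φ : M → ℝ := fun x => dist base p - dist x p with hφ
  have hφBdd : BddAbove {r : ℝ | ∃ x y : M, x ≠ y ∧ r = |φ x - φ y| / dist x y} := by
    refine ⟨1, ?_⟩
    rintro r ⟨x, y, hxy, rfl⟩
    have hd : (0 : ℝ) < dist x y := dist_pos.mpr hxy
    rw [div_le_iff₀ hd, one_mul]
    have h2 : |dist x p - dist y p| ≤ dist x y := abs_dist_sub_le x y p
    have h3 : φ x - φ y = -(dist x p - dist y p) := by simp only [hφ]; ring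
    rw [h3, abs_neg]; exact h2
  have hφqp : |φ q - φ p| = dist q p := by
    have : φ q - φ p = -(dist q p) := by simp only [hφ, dist_self]; ring
    rw [this, abs_neg, abs_of_nonneg dist_nonneg]
  have hφnorm : lipNorm φ = 1 := by
    apply le_antisymm
    · refine csSup_le ⟨|φ q - φ p| / dist q p, q, p, hqp, rfl⟩ ?_
      rintro r ⟨x, y, hxy, rfl⟩
      have hd : (0 : ℝ) < dist x y := dist_pos.mpr hxy
      rw [div_le_iff₀ hd, one_mul]
      have h2 : |dist x p - dist y p| ≤ dist x y := abs_dist_sub_le x y p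
      have h3 : φ x - φ y = -(dist x p - dist y p) := by simp only [hφ]; ring
      rw [h3, abs_neg]; exact h2
    · have hd : (0 : ℝ) < dist q p := dist_pos.mpr hqp
      have hmem : |φ q - φ p| / dist q p ∈
          {r : ℝ | ∃ x y : M, x ≠ y ∧ r = |φ x - φ y| / dist x y} := ⟨q, p, hqp, rfl⟩
      have := le_csSup hφBdd hmem
      rwa [hφqp, div_self (ne_of_gt hd)] at this
  have hφSA : StronglyAttains φ := by
    refine ⟨q, p, hqp, ?_⟩
    rw [hφnorm, one_mul, hφqp]
  have hφne : φ ≠ 0 := by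
    intro h0
    have h1 : φ q = 0 := congrFun h0 q
    have h2 : φ p = 0 := congrFun h0 p
    simp only [hφ, dist_self, sub_zero] at h2
    simp only [hφ, h2] at h1
    exact hqp (dist_eq_zero.mp (by linarith))
  exact ⟨f, g, ⟨hf0, K, hK⟩, ⟨by simp [hg, hf0], K + 1, hgLip⟩, hns, hgns,
    by rw [hdiff]; exact hφSA, by rw [hdiff]; exact hφne⟩

end Aux

/-- If `PNA(M) \ SNA(M)` is non-empty, then `(Lip₀(M) \ SNA(M)) ∪ {0}` is not a linear
subspace: there are `f, g ∉ SNA(M)` with `f − g ∈ SNA(M)` and `f − g ≠ 0`. -/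
theorem complement_SNA_not_linear_of_PNA {M : Type*} [MetricSpace M] [Infinite M]
    (base : M)
    (h : ∃ f : M → ℝ, MemLip0 base f ∧ PointwiseAttains f ∧ ¬ StronglyAttains f) :
    ∃ f g : M → ℝ, MemLip0 base f ∧ MemLip0 base g ∧
      ¬ StronglyAttains f ∧ ¬ StronglyAttains g ∧
      StronglyAttains (fun x => f x - g x) ∧ (fun x => f x - g x) ≠ 0 := by
  obtain ⟨f, ⟨hf0, K, hK⟩, ⟨p, hp⟩, hns⟩ := h
  set L := lipNorm f with hLdef
  set A := {r : ℝ | ∃ q : M, q ≠ p ∧ r = |f p - f q| / dist p q} with hA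
  have hAne : A.Nonempty := by
    obtain ⟨q, hqp⟩ := exists_ne p
    exact ⟨_, q, hqp, rfl⟩
  -- one of the two one-sided slope families at p approaches L
  have hsplit : (∀ δ : ℝ, 0 < δ → ∃ q : M, q ≠ p ∧ L - δ < (f q - f p) / dist q p) ∨
      (∀ δ : ℝ, 0 < δ → ∃ q : M, q ≠ p ∧ L - δ < (f p - f q) / dist q p) := by
    by_contra hcon
    push_neg at hcon
    obtain ⟨⟨δ₁, hδ₁, hbd₁⟩, ⟨δ₂, hδ₂, hbd₂⟩⟩ := hcon
    set δ := min δ₁ δ₂ with hδdef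
    have hδ0 : 0 < δ := lt_min hδ₁ hδ₂
    have hub : ∀ r ∈ A, r ≤ L - δ := by
      rintro r ⟨q, hqp, rfl⟩
      have hd : (0 : ℝ) < dist p q := dist_pos.mpr (Ne.symm hqp)
      have hd' : dist q p = dist p q := dist_comm q p
      have h1 : (f q - f p) / dist q p ≤ L - δ₁ := hbd₁ q hqp
      have h2 : (f p - f q) / dist q p ≤ L - δ₂ := hbd₂ q hqp
      rw [hd'] at h1 h2
      have hmin1 : δ ≤ δ₁ := min_le_left _ _
      have hmin2 : δ ≤ δ₂ := min_le_right _ _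
      have heq : |f p - f q| / dist p q = |(f p - f q) / dist p q| := by
        rw [abs_div, abs_of_pos hd]
      have hneg : (f q - f p) / dist p q = -((f p - f q) / dist p q) := by ring
      rw [hneg] at h1
      rw [heq]
      exact abs_le.mpr ⟨by linarith, by linarith⟩
    have := csSup_le hAne hub
    rw [hp] at this
    linarith
  rcases hsplit with hpos | hneg
  · exact key_construction base f hf0 K hK hns p hpos
  · -- apply to -f
    have hK' : LipschitzWith K (fun x => -f x) := by
      refine LipschitzWith.of_dist_le_mul (fun x y => ?_)
      have := hK.dist_le_mul x y
      rw [Real.dist_eq] at this ⊢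
      rw [show -f x - -f y = -(f x - f y) by ring, abs_neg]
      exact this
    have hns' : ¬ StronglyAttains (fun x => -f x) := fun hsa => hns (stronglyAttains_neg hsa)
    have happ' : ∀ δ : ℝ, 0 < δ →
        ∃ q : M, q ≠ p ∧ lipNorm (fun x => -f x) - δ < ((-f q) - (-f p)) / dist q p := by
      intro δ hδ
      obtain ⟨q, hqp, hq⟩ := hneg δ hδ
      refine ⟨q, hqp, ?_⟩
      rw [lipNorm_neg]
      have : (-f q) - (-f p) = f p - f q := by ring
      rw [this]
      exact hq
    exact key_construction base (fun x => -f x) (by simp [hf0]) K hK' hns' p happ'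
end

section
/- For every infinite metric space M with a distinguished base point 0, the set (Lip₀(M) \ SNA(M)) ∪ {0} is not a linear subspace of Lip₀(M): there exist f, g ∈ Lip₀(M), neither of which strongly attains its norm, such that f + g strongly attains its norm and f + g ≠ 0. -/
open Filter Set
open scoped ZeroAtInfty ENNReal NNReal

section Helpers
variable {M : Type*} [MetricSpace M]

lemma lipNorm_eq_of (f : M → ℝ) (L : ℝ)
    (h1 : ∀ x y : M, x ≠ y → |f x - f y| ≤ L * dist x y)
    (h2 : ∀ ε : ℝ, 0 < ε → ∃ x y : M, x ≠ y ∧ L - ε < |f x - f y| / dist x y) :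
    lipNorm f = L := by
  unfold lipNorm
  apply csSup_eq_of_forall_le_of_forall_lt_exists_gt
  · obtain ⟨x, y, hxy, -⟩ := h2 1 one_pos
    exact ⟨_, x, y, hxy, rfl⟩
  · rintro r ⟨x, y, hxy, rfl⟩
    rw [div_le_iff₀ (dist_pos.2 hxy)]
    exact h1 x y hxy
  · intro w hw
    obtain ⟨x, y, hxy, h⟩ := h2 (L - w) (by linarith)
    exact ⟨_, ⟨x, y, hxy, rfl⟩, by linarith⟩

lemma not_stronglyAttains_of (f : M → ℝ) (L : ℝ)
    (h1 : ∀ x y : M, x ≠ y → |f x - f y| < L * dist x y)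
    (hn : lipNorm f = L) : ¬ StronglyAttains f := by
  rintro ⟨x, y, hxy, h⟩
  rw [hn] at h
  exact absurd h (ne_of_lt (h1 x y hxy))

lemma master (base : M) (f g S : M → ℝ) (Lf Lg LS : ℝ)
    (hsum : ∀ x, f x + g x = S x)
    (hf1 : ∀ x y : M, x ≠ y → |f x - f y| < Lf * dist x y)
    (hf2 : ∀ ε : ℝ, 0 < ε → ∃ x y : M, x ≠ y ∧ Lf - ε < |f x - f y| / dist x y)
    (hg1 : ∀ x y : M, x ≠ y → |g x - g y| < Lg * dist x y)
    (hg2 : ∀ ε : ℝ, 0 < ε → ∃ x y : M, x ≠ y ∧ Lg - ε < |g x - g y| / dist x y)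
    (hS1 : ∀ x y : M, x ≠ y → |S x - S y| ≤ LS * dist x y)
    (hS2 : ∃ x y : M, x ≠ y ∧ |S x - S y| = LS * dist x y ∧ S x ≠ S y) :
    ∃ f g : M → ℝ, MemLip0 base f ∧ MemLip0 base g ∧
      ¬ StronglyAttains f ∧ ¬ StronglyAttains g ∧
      StronglyAttains (fun x => f x + g x) ∧ (fun x => f x + g x) ≠ 0 := by
  refine ⟨fun x => f x - f base, fun x => g x - g base, ?_, ?_, ?_, ?_, ?_, ?_⟩
  · refine ⟨by ring, Lf.toNNReal, LipschitzWith.of_dist_le_mul fun x y => ?_⟩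
    rcases eq_or_ne x y with rfl | hxy
    · simp
    · have := hf1 x y hxy
      have h2 : Lf ≤ (Lf.toNNReal : ℝ) := Real.le_coe_toNNReal Lf
      have hd : (0:ℝ) ≤ dist x y := dist_nonneg
      calc dist (f x - f base) (f y - f base) = |f x - f y| := by
            rw [Real.dist_eq]; ring_nf
        _ ≤ Lf * dist x y := le_of_lt (hf1 x y hxy)
        _ ≤ (Lf.toNNReal : ℝ) * dist x y := by nlinarith
  · refine ⟨by ring, Lg.toNNReal, LipschitzWith.of_dist_le_mul fun x y => ?_⟩
    rcases eq_or_ne x y with rfl | hxy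
    · simp
    · have h2 : Lg ≤ (Lg.toNNReal : ℝ) := Real.le_coe_toNNReal Lg
      have hd : (0:ℝ) ≤ dist x y := dist_nonneg
      calc dist (g x - g base) (g y - g base) = |g x - g y| := by
            rw [Real.dist_eq]; ring_nf
        _ ≤ Lg * dist x y := le_of_lt (hg1 x y hxy)
        _ ≤ (Lg.toNNReal : ℝ) * dist x y := by nlinarith
  · have key : ∀ x y : M, (f x - f base) - (f y - f base) = f x - f y := by intros; ring
    apply not_stronglyAttains_of _ Lf
    · intro x y hxy; rw [key]; exact hf1 x y hxy
    · apply lipNorm_eq_of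
      · intro x y hxy; rw [key]; exact le_of_lt (hf1 x y hxy)
      · intro ε hε
        obtain ⟨x, y, hxy, h⟩ := hf2 ε hε
        exact ⟨x, y, hxy, by rw [key]; exact h⟩
  · have key : ∀ x y : M, (g x - g base) - (g y - g base) = g x - g y := by intros; ring
    apply not_stronglyAttains_of _ Lg
    · intro x y hxy; rw [key]; exact hg1 x y hxy
    · apply lipNorm_eq_of
      · intro x y hxy; rw [key]; exact le_of_lt (hg1 x y hxy)
      · intro ε hε
        obtain ⟨x, y, hxy, h⟩ := hg2 ε hε
        exact ⟨x, y, hxy, by rw [key]; exact h⟩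
  · have key : ∀ x y : M, (f x - f base + (g x - g base)) - (f y - f base + (g y - g base))
        = S x - S y := by
      intro x y
      have h1 := hsum x; have h2 := hsum y
      ring_nf
      ring_nf at h1 h2
      linarith
    obtain ⟨x, y, hxy, heq, hne⟩ := hS2
    have hlip : lipNorm (fun x => f x - f base + (g x - g base)) = LS := by
      apply lipNorm_eq_of
      · intro a b hab; rw [key]; exact hS1 a b hab
      · intro ε hε
        refine ⟨x, y, hxy, ?_⟩
        rw [key, heq, mul_div_assoc, div_self (ne_of_gt (dist_pos.2 hxy)), mul_one]
        linarith
    exact ⟨x, y, hxy, by rw [hlip, key, heq]⟩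
  · obtain ⟨x, y, hxy, heq, hne⟩ := hS2
    intro h0
    have hx := congrFun h0 x
    have hy := congrFun h0 y
    simp only [Pi.zero_apply] at hx hy
    have h1 := hsum x; have h2 := hsum y
    apply hne
    have : S x - S y = 0 := by linarith
    linarith

end Helpers

section RealHelpers

lemma phi_chord (a b : ℝ) (ha : 0 ≤ a) (hb : 0 ≤ b) (hab : a ≠ b) :
    |a / (1 + a) - b / (1 + b)| < |a - b| := by
  have h1a : (0:ℝ) < 1 + a := by linarith
  have h1b : (0:ℝ) < 1 + b := by linarith
  have key : a / (1 + a) - b / (1 + b) = (a - b) / ((1 + a) * (1 + b)) := by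
    field_simp; ring
  rw [key, abs_div]
  have hprod : 1 < (1 + a) * (1 + b) := by
    rcases (lt_or_gt_of_ne hab) with h | h <;> nlinarith
  rw [abs_of_pos (by nlinarith : (0:ℝ) < (1 + a) * (1 + b))]
  exact div_lt_self (abs_pos.2 (sub_ne_zero.2 hab)) hprod

lemma theta_chord' (a b : ℝ) (hb : 0 ≤ b) (hba : b < a) :
    |(min a 1 / 2 - a / (1 + a)) - (min b 1 / 2 - b / (1 + b))| < (a - b) / 2 := by
  have ha : (0:ℝ) < a := lt_of_le_of_lt hb hba
  have h1a : (0:ℝ) < 1 + a := by linarith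
  have h1b : (0:ℝ) < 1 + b := by linarith
  have hv : a / (1 + a) - b / (1 + b) = (a - b) / ((1 + a) * (1 + b)) := by
    field_simp; ring
  have goal_eq : (min a 1 / 2 - a / (1 + a)) - (min b 1 / 2 - b / (1 + b))
      = (min a 1 - min b 1) / 2 - (a - b) / ((1 + a) * (1 + b)) := by
    rw [← hv]; ring
  have hv0 : 0 < (a - b) / ((1 + a) * (1 + b)) := div_pos (by linarith) (by positivity)
  have hu0 : (0:ℝ) ≤ min a 1 - min b 1 :=
    sub_nonneg.2 (min_le_min hba.le le_rfl)
  have hu1 : min a 1 - min b 1 ≤ a - b := by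
    rcases le_total a 1 with h | h <;> rcases le_total b 1 with h' | h'
    · rw [min_eq_left h, min_eq_left h']
    · linarith
    · rw [min_eq_right h, min_eq_left h']; linarith
    · rw [min_eq_right h, min_eq_right h']; linarith
  rw [goal_eq, abs_lt]
  constructor
  · rcases le_or_gt a 1 with h | h
    · have hua : min a 1 - min b 1 = a - b := by
        rw [min_eq_left h, min_eq_left (by linarith : b ≤ 1)]
      have hlt : (a - b) / ((1 + a) * (1 + b)) < a - b := by
        apply div_lt_self (by linarith)
        nlinarith
      rw [hua]; linarith
    · have h2 : (2:ℝ) < (1 + a) * (1 + b) := by nlinarith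
      have hlt : (a - b) / ((1 + a) * (1 + b)) < (a - b) / 2 :=
        div_lt_div_of_pos_left (by linarith) (by norm_num) h2
      linarith
  · linarith

lemma theta_chord (a b : ℝ) (ha : 0 ≤ a) (hb : 0 ≤ b) (hab : a ≠ b) :
    |(min a 1 / 2 - a / (1 + a)) - (min b 1 / 2 - b / (1 + b))| < |a - b| / 2 := by
  rcases lt_or_gt_of_ne hab with h | h
  · rw [abs_sub_comm, show |a - b| = b - a by rw [abs_sub_comm, abs_of_pos (by linarith)]]
    exact theta_chord' b a ha h
  · rw [abs_of_pos (by linarith : (0:ℝ) < a - b)]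
    exact theta_chord' a b hb h

lemma min_chord (a b : ℝ) : |min a 1 - min b 1| ≤ |a - b| := by
  rcases le_total a 1 with h | h <;> rcases le_total b 1 with h' | h'
  · rw [min_eq_left h, min_eq_left h']
  · rw [min_eq_left h, min_eq_right h', abs_le]
    cases abs_cases (a - b) <;> constructor <;> linarith
  · rw [min_eq_right h, min_eq_left h', abs_le]
    cases abs_cases (a - b) <;> constructor <;> linarith
  · rw [min_eq_right h, min_eq_right h']
    simp [abs_nonneg]

end RealHelpers

open Classical in
noncomputable def blobC {M : Type*} [MetricSpace M] (p : ℕ → M) (c : ℕ → ℝ) (x : M) : ℝ :=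
  if h : ∃ k, x = p k then c (h.choose) else 0

lemma blobC_center {M : Type*} [MetricSpace M] {p : ℕ → M} (hinj : Function.Injective p)
    (c : ℕ → ℝ) (n : ℕ) : blobC p c (p n) = c n := by
  have h : ∃ k, p n = p k := ⟨n, rfl⟩
  unfold blobC
  rw [dif_pos h]
  exact congrArg c (hinj h.choose_spec).symm

lemma blobC_off {M : Type*} [MetricSpace M] {p : ℕ → M} (c : ℕ → ℝ) {x : M}
    (hx : ∀ k, x ≠ p k) : blobC p c x = 0 := by
  unfold blobC
  rw [dif_neg]
  rintro ⟨k, hk⟩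
  exact hx k hk

section CaseC
variable {M : Type*} [MetricSpace M]

lemma blob_strict (p q : ℕ → M) (hinj : Function.Injective p)
    (hmin : ∀ n, ∀ x : M, x ≠ p n → dist (p n) (q n) ≤ dist (p n) x)
    (c : ℕ → ℝ) (L : ℝ) (hL : 0 < L)
    (hc0 : ∀ n, 0 ≤ c n) (hc1 : ∀ n, c n < L * dist (p n) (q n))
    (x y : M) (hxy : x ≠ y) : |blobC p c x - blobC p c y| < L * dist x y := by
  have hdxy : 0 < dist x y := dist_pos.2 hxy
  by_cases hx : ∃ k, x = p k
  · obtain ⟨n, rfl⟩ := hx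
    by_cases hy : ∃ k, y = p k
    · obtain ⟨m, rfl⟩ := hy
      rw [blobC_center hinj, blobC_center hinj]
      have hd1 : dist (p n) (q n) ≤ dist (p n) (p m) := hmin n (p m) (Ne.symm hxy)
      have hd2 : dist (p m) (q m) ≤ dist (p m) (p n) := hmin m (p n) hxy
      rw [dist_comm (p m) (p n)] at hd2
      have h1 : c n < L * dist (p n) (p m) :=
        lt_of_lt_of_le (hc1 n) (mul_le_mul_of_nonneg_left hd1 hL.le)
      have h2 : c m < L * dist (p n) (p m) :=
        lt_of_lt_of_le (hc1 m) (mul_le_mul_of_nonneg_left hd2 hL.le)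
      rw [abs_sub_lt_iff]
      exact ⟨by linarith [hc0 m], by linarith [hc0 n]⟩
    · push_neg at hy
      rw [blobC_center hinj, blobC_off _ hy, sub_zero, abs_of_nonneg (hc0 n)]
      have hd1 : dist (p n) (q n) ≤ dist (p n) y := hmin n y (fun h => hxy h.symm)
      exact lt_of_lt_of_le (hc1 n) (mul_le_mul_of_nonneg_left hd1 hL.le)
  · push_neg at hx
    by_cases hy : ∃ k, y = p k
    · obtain ⟨m, rfl⟩ := hy
      rw [blobC_center hinj, blobC_off _ hx, zero_sub, abs_neg, abs_of_nonneg (hc0 m)]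
      have hd1 : dist (p m) (q m) ≤ dist (p m) x := hmin m x (fun h => hxy h)
      rw [dist_comm (p m) x] at hd1
      exact lt_of_lt_of_le (hc1 m) (mul_le_mul_of_nonneg_left hd1 hL.le)
    · push_neg at hy
      rw [blobC_off _ hx, blobC_off _ hy, sub_self, abs_zero]
      positivity

lemma blob_weak (p q : ℕ → M) (hinj : Function.Injective p)
    (hmin : ∀ n, ∀ x : M, x ≠ p n → dist (p n) (q n) ≤ dist (p n) x)
    (c : ℕ → ℝ) (L : ℝ) (hL : 0 < L)
    (hc0 : ∀ n, 0 ≤ c n) (hc1 : ∀ n, c n ≤ L * dist (p n) (q n))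
    (x y : M) (hxy : x ≠ y) : |blobC p c x - blobC p c y| ≤ L * dist x y := by
  have hdxy : 0 < dist x y := dist_pos.2 hxy
  by_cases hx : ∃ k, x = p k
  · obtain ⟨n, rfl⟩ := hx
    by_cases hy : ∃ k, y = p k
    · obtain ⟨m, rfl⟩ := hy
      rw [blobC_center hinj, blobC_center hinj]
      have hd1 : dist (p n) (q n) ≤ dist (p n) (p m) := hmin n (p m) (Ne.symm hxy)
      have hd2 : dist (p m) (q m) ≤ dist (p m) (p n) := hmin m (p n) hxy
      rw [dist_comm (p m) (p n)] at hd2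
      have h1 : c n ≤ L * dist (p n) (p m) :=
        le_trans (hc1 n) (mul_le_mul_of_nonneg_left hd1 hL.le)
      have h2 : c m ≤ L * dist (p n) (p m) :=
        le_trans (hc1 m) (mul_le_mul_of_nonneg_left hd2 hL.le)
      rw [abs_sub_le_iff]
      exact ⟨by linarith [hc0 m], by linarith [hc0 n]⟩
    · push_neg at hy
      rw [blobC_center hinj, blobC_off _ hy, sub_zero, abs_of_nonneg (hc0 n)]
      have hd1 : dist (p n) (q n) ≤ dist (p n) y := hmin n y (fun h => hxy h.symm)
      exact le_trans (hc1 n) (mul_le_mul_of_nonneg_left hd1 hL.le)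
  · push_neg at hx
    by_cases hy : ∃ k, y = p k
    · obtain ⟨m, rfl⟩ := hy
      rw [blobC_center hinj, blobC_off _ hx, zero_sub, abs_neg, abs_of_nonneg (hc0 m)]
      have hd1 : dist (p m) (q m) ≤ dist (p m) x := hmin m x (fun h => hxy h)
      rw [dist_comm (p m) x] at hd1
      exact le_trans (hc1 m) (mul_le_mul_of_nonneg_left hd1 hL.le)
    · push_neg at hy
      rw [blobC_off _ hx, blobC_off _ hy, sub_self, abs_zero]
      positivity

lemma caseC (base : M) (p q : ℕ → M) (hinj : Function.Injective p)
    (hpq : ∀ n, p n ≠ q n)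
    (hmin : ∀ n, ∀ x : M, x ≠ p n → dist (p n) (q n) ≤ dist (p n) x)
    (hq : ∀ n m, q n ≠ p m) :
    ∃ f g : M → ℝ, MemLip0 base f ∧ MemLip0 base g ∧
      ¬ StronglyAttains f ∧ ¬ StronglyAttains g ∧
      StronglyAttains (fun x => f x + g x) ∧ (fun x => f x + g x) ≠ 0 := by
  have ht : ∀ n, 0 < dist (p n) (q n) := fun n => dist_pos.2 (hpq n)
  set a : ℕ → ℝ := fun n => ((n:ℝ) + 1) / ((n:ℝ) + 2) with ha_def
  have ha0 : ∀ n, 0 < a n := fun n => by rw [ha_def]; positivity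
  have ha1 : ∀ n, a n < 1 := fun n => by
    rw [ha_def]
    rw [div_lt_one (by positivity)]
    linarith
  set cf : ℕ → ℝ := fun n => a n * dist (p n) (q n) / 2 with hcf_def
  set cS : ℕ → ℝ := fun n => if n = 0 then dist (p 0) (q 0) / 4 else 0 with hcS_def
  set cg : ℕ → ℝ := fun n => cf n - cS n with hcg_def
  have hcf_val : ∀ n, cf n = a n * dist (p n) (q n) / 2 := fun n => rfl
  have hcS0 : cS 0 = dist (p 0) (q 0) / 4 := if_pos rfl
  have hcSn : ∀ n, n ≠ 0 → cS n = 0 := fun n hn => if_neg hn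
  have ha00 : a 0 = 1/2 := by rw [ha_def]; norm_num
  have hcg_val : ∀ n, cg n = cf n - cS n := fun n => rfl
  have hcg0 : cg 0 = 0 := by
    rw [hcg_val, hcf_val, hcS0, ha00]; ring
  have hcf0 : ∀ n, 0 ≤ cf n := fun n =>
    div_nonneg (mul_nonneg (ha0 n).le dist_nonneg) (by norm_num)
  have hcf1 : ∀ n, cf n < 1/2 * dist (p n) (q n) := by
    intro n
    rw [hcf_val]
    have h1 := ha1 n; have h2 := ht n; have h3 := ha0 n
    nlinarith
  have hcgpos : ∀ n, 0 ≤ cg n := by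
    intro n
    rcases Nat.eq_zero_or_pos n with rfl | hn
    · rw [hcg0]
    · rw [hcg_val, hcSn n (Nat.pos_iff_ne_zero.mp hn), sub_zero]
      exact hcf0 n
  have hcglt : ∀ n, cg n < 1/2 * dist (p n) (q n) := by
    intro n
    rcases Nat.eq_zero_or_pos n with rfl | hn
    · rw [hcg0]; linarith [ht 0]
    · rw [hcg_val, hcSn n (Nat.pos_iff_ne_zero.mp hn), sub_zero]
      exact hcf1 n
  have key2 : ∀ (ε : ℝ), 0 < ε → ∀ N : ℕ, 1/ε < (N:ℝ) → 1/2 - ε < a (N+1) / 2 := by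
    intro ε hε N hN
    have hNε : 1 < (N:ℝ) * ε := (div_lt_iff₀ hε).mp hN
    rw [ha_def]
    push_cast
    rw [div_div, lt_div_iff₀ (by positivity)]
    nlinarith
  have hslope : ∀ n, a n * dist (p n) (q n) / 2 / dist (p n) (q n) = a n / 2 := by
    intro n
    have := (ht n).ne'
    field_simp
  apply master base (blobC p cf) (fun x => blobC p cS x - blobC p cf x) (blobC p cS)
    (1/2) (1/2) (1/4)
  · intro x; ring
  · -- hf1
    intro x y hxy
    exact blob_strict p q hinj hmin cf (1/2) (by norm_num) hcf0 hcf1 x y hxy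
  · -- hf2
    intro ε hε
    obtain ⟨N, hN⟩ := exists_nat_gt (1/ε)
    refine ⟨p (N+1), q (N+1), hpq (N+1), ?_⟩
    rw [blobC_center hinj, blobC_off _ (fun k => hq (N+1) k), sub_zero,
      abs_of_nonneg (hcf0 (N+1)), hcf_val, hslope]
    exact key2 ε hε N hN
  · -- hg1
    intro x y hxy
    have hkey := blob_strict p q hinj hmin cg (1/2) (by norm_num) hcgpos hcglt x y hxy
    have hx' : blobC p cg x = blobC p cf x - blobC p cS x := by
      by_cases hx : ∃ k, x = p k
      · obtain ⟨n, rfl⟩ := hx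
        rw [blobC_center hinj, blobC_center hinj, blobC_center hinj, hcg_val]
      · push_neg at hx
        rw [blobC_off _ hx, blobC_off _ hx, blobC_off _ hx]; ring
    have hy' : blobC p cg y = blobC p cf y - blobC p cS y := by
      by_cases hy : ∃ k, y = p k
      · obtain ⟨n, rfl⟩ := hy
        rw [blobC_center hinj, blobC_center hinj, blobC_center hinj, hcg_val]
      · push_neg at hy
        rw [blobC_off _ hy, blobC_off _ hy, blobC_off _ hy]; ring
    rw [hx', hy'] at hkey
    calc |blobC p cS x - blobC p cf x - (blobC p cS y - blobC p cf y)|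
        = |blobC p cf x - blobC p cS x - (blobC p cf y - blobC p cS y)| := by
          rw [abs_sub_comm]; congr 1; ring
      _ < 1/2 * dist x y := hkey
  · -- hg2
    intro ε hε
    obtain ⟨N, hN⟩ := exists_nat_gt (1/ε)
    refine ⟨p (N+1), q (N+1), hpq (N+1), ?_⟩
    rw [blobC_center hinj, blobC_center hinj,
      blobC_off (c := cS) (fun k => hq (N+1) k), blobC_off (c := cf) (fun k => hq (N+1) k),
      hcSn (N+1) (Nat.succ_ne_zero N)]
    rw [show (0:ℝ) - cf (N+1) - (0 - 0) = -(cf (N+1)) by ring, abs_neg,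
      abs_of_nonneg (hcf0 (N+1)), hcf_val, hslope]
    exact key2 ε hε N hN
  · -- hS1
    intro x y hxy
    apply blob_weak p q hinj hmin cS (1/4) (by norm_num) ?_ ?_ x y hxy
    · intro n
      rcases Nat.eq_zero_or_pos n with rfl | hn
      · rw [hcS0]; positivity
      · rw [hcSn n (Nat.pos_iff_ne_zero.mp hn)]
    · intro n
      rcases Nat.eq_zero_or_pos n with rfl | hn
      · rw [hcS0]; linarith [ht 0]
      · rw [hcSn n (Nat.pos_iff_ne_zero.mp hn)]
        positivity
  · -- hS2
    refine ⟨p 0, q 0, hpq 0, ?_, ?_⟩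
    · rw [blobC_center hinj, blobC_off _ (fun k => hq 0 k), sub_zero, hcS0,
        abs_of_nonneg (by positivity)]
      ring
    · rw [blobC_center hinj, blobC_off _ (fun k => hq 0 k), hcS0]
      have := ht 0
      positivity
end CaseC

lemma caseA {M : Type*} [MetricSpace M] (base p : M)
    (hp : ∀ ε : ℝ, 0 < ε → ∃ x : M, x ≠ p ∧ dist x p < ε) :
    ∃ f g : M → ℝ, MemLip0 base f ∧ MemLip0 base g ∧
      ¬ StronglyAttains f ∧ ¬ StronglyAttains g ∧
      StronglyAttains (fun x => f x + g x) ∧ (fun x => f x + g x) ≠ 0 := by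
  apply master base
    (fun x => dist x p / (1 + dist x p))
    (fun x => min (dist x p) 1 / 2 - dist x p / (1 + dist x p))
    (fun x => min (dist x p) 1 / 2) 1 (1/2) (1/2)
  · intro x; ring
  · -- hf1
    intro x y hxy
    rcases eq_or_ne (dist x p) (dist y p) with h | h
    · rw [h, sub_self, abs_zero, one_mul]
      exact dist_pos.2 hxy
    · calc |dist x p / (1 + dist x p) - dist y p / (1 + dist y p)|
          < |dist x p - dist y p| := phi_chord _ _ dist_nonneg dist_nonneg h
        _ ≤ dist x y := abs_dist_sub_le x y p
        _ ≤ 1 * dist x y := by rw [one_mul]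
  · -- hf2
    intro ε hε
    obtain ⟨x, hx, hlt⟩ := hp ε hε
    have hr : 0 < dist x p := dist_pos.2 hx
    have h1r : (0:ℝ) < 1 + dist x p := by linarith
    refine ⟨x, p, hx, ?_⟩
    have hfp : dist p p / (1 + dist p p) = 0 := by simp
    rw [hfp, sub_zero, abs_of_nonneg (by positivity)]
    have heq : dist x p / (1 + dist x p) / dist x p = 1 / (1 + dist x p) := by
      field_simp
    rw [heq, lt_div_iff₀ h1r]
    nlinarith
  · -- hg1
    intro x y hxy
    rcases eq_or_ne (dist x p) (dist y p) with h | h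
    · rw [h, sub_self, abs_zero]
      have := dist_pos.2 hxy; linarith
    · calc |min (dist x p) 1 / 2 - dist x p / (1 + dist x p)
            - (min (dist y p) 1 / 2 - dist y p / (1 + dist y p))|
          < |dist x p - dist y p| / 2 := theta_chord _ _ dist_nonneg dist_nonneg h
        _ ≤ dist x y / 2 := by
            have := abs_dist_sub_le x y p; linarith
        _ = 1/2 * dist x y := by ring
  · -- hg2
    intro ε hε
    obtain ⟨x, hx, hlt⟩ := hp (min ε 1) (by positivity)
    have hrε : dist x p < ε := lt_of_lt_of_le hlt (min_le_left _ _)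
    have hr1 : dist x p < 1 := lt_of_lt_of_le hlt (min_le_right _ _)
    have hr : 0 < dist x p := dist_pos.2 hx
    have h1r : (0:ℝ) < 1 + dist x p := by linarith
    refine ⟨x, p, hx, ?_⟩
    have hgp : min (dist p p) 1 / 2 - dist p p / (1 + dist p p) = 0 := by simp
    rw [hgp, sub_zero, min_eq_left hr1.le]
    set r := dist x p with hrdef
    have hneg : r / 2 - r / (1 + r) ≤ 0 := by
      rw [sub_nonpos, div_le_div_iff₀ two_pos h1r]
      nlinarith
    rw [abs_of_nonpos hneg]
    have heq : -(r / 2 - r / (1 + r)) / r = 1 / (1 + r) - 1/2 := by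
      field_simp; ring
    rw [heq]
    have h5 : (1:ℝ) - ε < 1 / (1 + r) := by
      rw [lt_div_iff₀ h1r]; nlinarith
    linarith
  · -- hS1
    intro x y hxy
    calc |min (dist x p) 1 / 2 - min (dist y p) 1 / 2|
        = |min (dist x p) 1 - min (dist y p) 1| / 2 := by
          rw [show min (dist x p) 1 / 2 - min (dist y p) 1 / 2
            = (min (dist x p) 1 - min (dist y p) 1) / 2 by ring, abs_div, abs_two]
      _ ≤ |dist x p - dist y p| / 2 := by
          have := min_chord (dist x p) (dist y p); linarith
      _ ≤ dist x y / 2 := by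
          have := abs_dist_sub_le x y p; linarith
      _ = 1/2 * dist x y := by ring
  · -- hS2
    obtain ⟨x, hx, hlt⟩ := hp 1 one_pos
    have hr : 0 < dist x p := dist_pos.2 hx
    refine ⟨x, p, hx, ?_, ?_⟩
    · simp only [dist_self, min_eq_left hlt.le]
      rw [show min (0:ℝ) 1 = 0 by simp, zero_div, sub_zero,
        abs_of_nonneg (by positivity)]
      ring
    · simp only [dist_self]
      rw [show min (0:ℝ) 1 = 0 by simp, min_eq_left hlt.le, zero_div]
      exact ne_of_gt (half_pos hr)

lemma caseB {M : Type*} [MetricSpace M] (base p : M) (m : ℝ) (hm : 0 < m)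
    (hlow : ∀ x : M, x ≠ p → m < dist x p)
    (happ : ∀ δ : ℝ, 0 < δ → ∃ x : M, x ≠ p ∧ dist x p < m + δ) :
    ∃ f g : M → ℝ, MemLip0 base f ∧ MemLip0 base g ∧
      ¬ StronglyAttains f ∧ ¬ StronglyAttains g ∧
      StronglyAttains (fun x => f x + g x) ∧ (fun x => f x + g x) ≠ 0 := by
  have hfval : ∀ x : M, x ≠ p → max (m - dist x p) 0 = 0 := fun x hx =>
    max_eq_right (by linarith [hlow x hx])
  have hfp : max (m - dist p p) 0 = m := by simp [hm.le]
  have keyineq : ∀ ε d : ℝ, 0 < ε → m < d → d < m + ε * m → (1/2 - ε) * d < m / 2 := by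
    intro ε d hε hd1 hd2
    rcases le_or_gt ε (1/2) with h | h
    · nlinarith [mul_pos hε hm]
    · nlinarith [hm.trans hd1]
  apply master base
    (fun x => max (m - dist x p) 0 / 2)
    (fun x => dist x p - max (m - dist x p) 0 / 2)
    (fun x => dist x p) (1/2) (3/2) 1
  · intro x; ring
  · -- hf1
    intro x y hxy
    by_cases hxp : p = x
    · subst hxp
      have hyp : y ≠ p := fun h => hxy h.symm
      rw [hfp, hfval y hyp]
      rw [show |m / 2 - 0 / 2| = m / 2 by rw [zero_div, sub_zero]; exact abs_of_pos (half_pos hm)]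
      have := hlow y hyp
      rw [dist_comm y p] at this
      linarith
    · have hxp' : x ≠ p := fun h => hxp h.symm
      by_cases hyp : p = y
      · subst hyp
        rw [hfp, hfval x hxp']
        rw [show |0 / 2 - m / 2| = m / 2 by
          rw [zero_div, zero_sub, abs_neg]; exact abs_of_pos (half_pos hm)]
        have := hlow x hxp'
        linarith
      · have hyp' : y ≠ p := fun h => hyp h.symm
        rw [hfval x hxp', hfval y hyp', sub_self, abs_zero]
        have := dist_pos.2 hxy
        linarith
  · -- hf2
    intro ε hε
    obtain ⟨x, hx, hlt⟩ := happ (ε * m) (mul_pos hε hm)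
    refine ⟨x, p, hx, ?_⟩
    rw [hfp, hfval x hx]
    rw [show |0 / 2 - m / 2| = m / 2 by
      rw [zero_div, zero_sub, abs_neg]; exact abs_of_pos (half_pos hm)]
    rw [lt_div_iff₀ (dist_pos.2 hx)]
    exact keyineq ε (dist x p) hε (hlow x hx) hlt
  · -- hg1
    intro x y hxy
    by_cases hxp : p = x
    · subst hxp
      have hyp : y ≠ p := fun h => hxy h.symm
      rw [hfp, hfval y hyp, dist_self]
      have hd := hlow y hyp
      rw [dist_comm y p] at hd
      have hdp : 0 < dist p y := by linarith
      rw [show 0 - m / 2 - (dist y p - 0 / 2) = -(m/2 + dist y p) by ring, abs_neg,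
        abs_of_pos (by rw [dist_comm y p]; linarith)]
      rw [dist_comm y p]
      linarith
    · have hxp' : x ≠ p := fun h => hxp h.symm
      by_cases hyp : p = y
      · subst hyp
        rw [hfp, hfval x hxp', dist_self]
        have hd := hlow x hxp'
        rw [show dist x p - 0 / 2 - (0 - m / 2) = dist x p + m/2 by ring,
          abs_of_pos (by linarith)]
        linarith
      · have hyp' : y ≠ p := fun h => hyp h.symm
        rw [hfval x hxp', hfval y hyp']
        have h1 := abs_dist_sub_le x y p
        have h2 := dist_pos.2 hxy
        rw [show dist x p - 0/2 - (dist y p - 0/2) = dist x p - dist y p by ring]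
        linarith
  · -- hg2
    intro ε hε
    obtain ⟨x, hx, hlt⟩ := happ (ε * m) (mul_pos hε hm)
    refine ⟨x, p, hx, ?_⟩
    rw [hfp, hfval x hx, dist_self]
    have hd := hlow x hx
    rw [show dist x p - 0 / 2 - (0 - m / 2) = dist x p + m/2 by ring,
      abs_of_pos (by linarith)]
    rw [lt_div_iff₀ (dist_pos.2 hx)]
    have := keyineq ε (dist x p) hε hd hlt
    nlinarith
  · -- hS1
    intro x y hxy
    rw [one_mul]
    exact abs_dist_sub_le x y p
  · -- hS2
    obtain ⟨x, hx, -⟩ := happ 1 one_pos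
    refine ⟨x, p, hx, ?_, ?_⟩
    · rw [dist_self, sub_zero, one_mul, abs_of_pos (dist_pos.2 hx)]
    · rw [dist_self]
      exact ne_of_gt (dist_pos.2 hx)

lemma existsSeq {M : Type*} [MetricSpace M] [Infinite M]
    (hC : ∀ pt : M, ∃ qt : M, qt ≠ pt ∧ ∀ x : M, x ≠ pt → dist pt qt ≤ dist pt x) :
    ∃ p q : ℕ → M, Function.Injective p ∧ (∀ n, p n ≠ q n) ∧
      (∀ n, ∀ x : M, x ≠ p n → dist (p n) (q n) ≤ dist (p n) x) ∧ (∀ n m, q n ≠ p m) := by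
  choose Q hQ1 hQ2 using hC
  by_cases hhub : ∃ z : M, {x : M | Q x = z}.Infinite
  · obtain ⟨z, hz⟩ := hhub
    have hz2 : ({x : M | Q x = z} \ {z}).Infinite := hz.diff (Set.finite_singleton z)
    let e := Set.Infinite.natEmbedding _ hz2
    have hmem : ∀ n, ((e n : M) ∈ {x : M | Q x = z} \ {z}) := fun n => (e n).2
    refine ⟨fun n => (e n : M), fun _ => z, ?_, ?_, ?_, ?_⟩
    · intro n m h
      exact e.injective (Subtype.ext h)
    · intro n
      intro h
      exact (hmem n).2 (Set.mem_singleton_iff.mpr (show (e n : M) = z from h))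
    · intro n x hx
      have hQz : Q (e n : M) = z := (hmem n).1
      have hle := hQ2 (↑(e n)) x hx
      rw [hQz] at hle
      exact hle
    · intro n m h
      exact (hmem m).2 (Set.mem_singleton_iff.mpr (show (e m : M) = z from h.symm))
  · push_neg at hhub
    have hfin : ∀ z : M, {x : M | Q x = z}.Finite := fun z => hhub z
    have fresh : ∀ s : Set M, s.Finite → ∃ x : M, x ∉ s := fun s hs =>
      hs.infinite_compl.nonempty
    let bad : List M → Set M := fun l =>
      ({x : M | x ∈ l} ∪ Q '' {x : M | x ∈ l}) ∪ {x | ∃ z ∈ l, Q x = z}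
    have badfin : ∀ l, (bad l).Finite := by
      intro l
      refine Set.Finite.union (Set.Finite.union l.finite_toSet (l.finite_toSet.image Q)) ?_
      have : {x | ∃ z ∈ l, Q x = z} = ⋃ z ∈ {x : M | x ∈ l}, {x | Q x = z} := by
        ext x; simp
      rw [this]
      exact l.finite_toSet.biUnion (fun z _ => hfin z)
    let pick : List M → M := fun l => (fresh (bad l) (badfin l)).choose
    have pick_spec : ∀ l, pick l ∉ bad l := fun l => (fresh (bad l) (badfin l)).choose_spec
    let L : ℕ → List M := fun n => Nat.rec [] (fun _ l => l ++ [pick l]) n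
    let p : ℕ → M := fun n => pick (L n)
    have hL : ∀ n, L (n+1) = L n ++ [p n] := fun n => rfl
    have hmemL : ∀ n k, k < n → p k ∈ L n := by
      intro n
      induction n with
      | zero => intro k hk; exact absurd hk (Nat.not_lt_zero k)
      | succ n ih =>
        intro k hk
        rw [hL, List.mem_append]
        rcases Nat.lt_succ_iff_lt_or_eq.mp hk with h | h
        · exact Or.inl (ih k h)
        · exact Or.inr (by rw [h]; exact List.mem_singleton_self _)
    have mem1 : ∀ (l : List M) (x : M), x ∈ l → x ∈ bad l := fun l x hx =>
      Set.mem_union_left _ (Set.mem_union_left _ hx)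
    have mem2 : ∀ (l : List M) (y : M), y ∈ l → Q y ∈ bad l := fun l y hy =>
      Set.mem_union_left _ (Set.mem_union_right _ ⟨y, hy, rfl⟩)
    have mem3 : ∀ (l : List M) (x z : M), z ∈ l → Q x = z → x ∈ bad l := fun l x z hz hQ =>
      Set.mem_union_right _ ⟨z, hz, hQ⟩
    have hinj : Function.Injective p := by
      intro n m h
      by_contra hnm
      rcases Nat.lt_or_ge n m with hlt | hge
      · exact pick_spec (L m) (mem1 (L m) (p m) (by rw [← h]; exact hmemL m n hlt))
      · have hlt : m < n := Nat.lt_of_le_of_ne hge (fun hh => hnm hh.symm)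
        exact pick_spec (L n) (mem1 (L n) (p n) (by rw [h]; exact hmemL n m hlt))
    refine ⟨p, fun n => Q (p n), hinj, ?_, ?_, ?_⟩
    · exact fun n => (hQ1 (p n)).symm
    · exact fun n x hx => hQ2 (p n) x hx
    · intro n m h
      have h' : Q (p n) = p m := h
      rcases lt_trichotomy n m with hlt | rfl | hgt
      · exact pick_spec (L m) (show p m ∈ bad (L m) from h' ▸ mem2 (L m) (p n) (hmemL m n hlt))
      · exact hQ1 (p n) h'
      · exact pick_spec (L n) (mem3 (L n) (p n) (p m) (hmemL n m hgt) h')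


/-- For every infinite pointed metric space `M`, the set `(Lip₀(M) \ SNA(M)) ∪ {0}` is not
a linear subspace of `Lip₀(M)`. -/
theorem complement_SNA_not_linear {M : Type*} [MetricSpace M] [Infinite M] (base : M) :
    ∃ f g : M → ℝ, MemLip0 base f ∧ MemLip0 base g ∧
      ¬ StronglyAttains f ∧ ¬ StronglyAttains g ∧
      StronglyAttains (fun x => f x + g x) ∧ (fun x => f x + g x) ≠ 0 := by
  by_cases hC : ∀ pt : M, ∃ qt : M, qt ≠ pt ∧ ∀ x : M, x ≠ pt → dist pt qt ≤ dist pt x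
  · obtain ⟨p, q, hinj, hpq, hmin, hq⟩ := existsSeq hC
    exact caseC base p q hinj hpq hmin hq
  · push_neg at hC
    obtain ⟨p, hp⟩ := hC
    by_cases hA : ∀ ε : ℝ, 0 < ε → ∃ x : M, x ≠ p ∧ dist x p < ε
    · exact caseA base p hA
    · push_neg at hA
      obtain ⟨ε, hε, hsep⟩ := hA
      set A : Set ℝ := {r : ℝ | ∃ x : M, x ≠ p ∧ r = dist x p} with hA_def
      obtain ⟨x₀, hx₀⟩ := exists_ne p
      have hne : A.Nonempty := ⟨dist x₀ p, x₀, hx₀, rfl⟩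
      have hbdd : BddBelow A := ⟨0, by rintro r ⟨x, hx, rfl⟩; exact dist_nonneg⟩
      set m : ℝ := sInf A with hm_def
      have hm_pos : 0 < m := lt_of_lt_of_le hε (le_csInf hne (by rintro r ⟨x, hx, rfl⟩; exact hsep x hx))
      have hm_le : ∀ x : M, x ≠ p → m ≤ dist x p := fun x hx => csInf_le hbdd ⟨x, hx, rfl⟩
      have hlow : ∀ x : M, x ≠ p → m < dist x p := by
        intro x hx
        rcases lt_or_eq_of_le (hm_le x hx) with h | h
        · exact h
        · exfalso
          obtain ⟨y, hy, hlt⟩ := hp x hx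
          have h1 : m ≤ dist y p := hm_le y hy
          rw [dist_comm y p] at h1
          rw [dist_comm p x, ← h] at hlt
          exact absurd hlt (not_lt.mpr h1)
      have happ : ∀ δ : ℝ, 0 < δ → ∃ x : M, x ≠ p ∧ dist x p < m + δ := by
        intro δ hδ
        have : sInf A < m + δ := by rw [← hm_def]; linarith
        obtain ⟨r, ⟨x, hx, rfl⟩, hr⟩ := (csInf_lt_iff hbdd hne).mp this
        exact ⟨x, hx, hr⟩
      exact caseB base p m hm_pos hlow happ
end

section
/- For every nontrivial real Banach space X (pointed at its origin), the set (Der(X) \ SNA(X)) ∪ {0} contains an isometric copy of c₀: there exists a linear map T : c₀ → Lip₀(X) such that ‖T a‖ = ‖a‖_∞ for every a ∈ c₀, and for every nonzero a ∈ c₀ the function T a attains its norm through a derivative but does not strongly attain its norm. -/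
open Filter Set
open scoped ZeroAtInfty ENNReal NNReal

/-- `f` attains its norm through a derivative: for some `x` and unit direction `e`, the
two-sided directional derivative exists and has modulus `‖f‖`. -/
def DerAttains {X : Type*} [NormedAddCommGroup X] [NormedSpace ℝ X] (f : X → ℝ) : Prop :=
  ∃ x e : X, ‖e‖ = 1 ∧ ∃ L : ℝ,
    Filter.Tendsto (fun t : ℝ => (f (x + t • e) - f x) / t)
      (nhdsWithin (0 : ℝ) {(0 : ℝ)}ᶜ) (nhds L) ∧
    |L| = lipNorm f

/-- `f` attains its norm locally directionally at a point `x̄` in the direction `u`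
toward `z`. -/
def LocDirAttains {X : Type*} [NormedAddCommGroup X] [NormedSpace ℝ X] (f : X → ℝ) : Prop :=
  ∃ (xbar u : X) (z : ℝ), ‖u‖ = 1 ∧ |z| = lipNorm f ∧
    ∃ p q : ℕ → X, (∀ n, p n ≠ q n) ∧
      Filter.Tendsto (fun n => (f (q n) - f (p n)) / ‖q n - p n‖) Filter.atTop (nhds z) ∧
      Filter.Tendsto (fun n => ‖p n - q n‖⁻¹ • (p n - q n)) Filter.atTop (nhds u) ∧
      Filter.Tendsto p Filter.atTop (nhds xbar) ∧
      Filter.Tendsto q Filter.atTop (nhds xbar)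

noncomputable def Pp (x : ℝ) : ℝ := if x ≤ 1/4 then 2*x^2 else 2*x - 2*x^2 - 1/4

noncomputable def Psi (t : ℝ) : ℝ := if t ≤ 1/2 then Pp (max t 0) else Pp (max (1-t) 0)

lemma Pp_zero : Pp 0 = 0 := by norm_num [Pp]

lemma Pp_half : Pp (1/2) = 1/4 := by norm_num [Pp]

lemma Pp_mono {x y : ℝ} (hx : 0 ≤ x) (hxy : x ≤ y) (hy : y ≤ 1/2) : Pp x ≤ Pp y := by
  unfold Pp
  rcases le_or_gt x (1/4) with h1 | h1 <;> rcases le_or_gt y (1/4) with h2 | h2 <;>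
    simp only [if_pos, if_neg, not_le, *] <;> nlinarith

lemma Pp_secant {x y : ℝ} (hx : 0 ≤ x) (hxy : x < y) (hy : y ≤ 1/2) :
    Pp y - Pp x < y - x := by
  unfold Pp
  rcases le_or_gt x (1/4) with h1 | h1 <;> rcases le_or_gt y (1/4) with h2 | h2 <;>
    simp only [if_pos, if_neg, not_le, *] <;> nlinarith [sq_nonneg (x - 1/4), sq_nonneg (y - 1/4), sq_nonneg (y - x)]

lemma Pp_nonneg {x : ℝ} (hx : 0 ≤ x) (hy : x ≤ 1/2) : 0 ≤ Pp x := by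
  have := Pp_mono le_rfl hx hy
  rwa [Pp_zero] at this

lemma Pp_le_quarter {x : ℝ} (hx : 0 ≤ x) (hy : x ≤ 1/2) : Pp x ≤ 1/4 := by
  have := Pp_mono hx hy le_rfl
  rwa [Pp_half] at this

lemma Psi_nonpos {t : ℝ} (ht : t ≤ 0) : Psi t = 0 := by
  unfold Psi
  rw [if_pos (by linarith), max_eq_right ht, Pp_zero]

lemma Psi_eq1 {t : ℝ} (h0 : 0 ≤ t) (h1 : t ≤ 1/2) : Psi t = Pp t := by
  unfold Psi; rw [if_pos h1, max_eq_left h0]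

lemma Psi_eq2 {t : ℝ} (h0 : 1/2 ≤ t) (h1 : t ≤ 1) : Psi t = Pp (1 - t) := by
  unfold Psi
  rcases eq_or_lt_of_le h0 with h | h
  · rw [if_pos h.symm.le, ← h, max_eq_left (by norm_num)]
    norm_num
  · rw [if_neg (by linarith), max_eq_left (by linarith)]

lemma Psi_nonneg (t : ℝ) : 0 ≤ Psi t := by
  unfold Psi
  rcases le_or_gt t (1/2) with h | h <;> simp only [if_pos, if_neg, not_le, *]
  · exact Pp_nonneg (le_max_right _ _) (max_le h (by norm_num))
  · exact Pp_nonneg (le_max_right _ _) (max_le (by linarith) (by norm_num))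

lemma Psi_lt_self {t : ℝ} (ht : 0 < t) : Psi t < t := by
  rcases le_or_gt t (1/2) with h | h
  · rw [Psi_eq1 ht.le h]
    have := Pp_secant le_rfl ht h
    rw [Pp_zero] at this; linarith
  · rcases le_or_gt t 1 with h1 | h1
    · rw [Psi_eq2 h.le h1]
      have := Pp_le_quarter (x := 1 - t) (by linarith) (by linarith)
      linarith
    · unfold Psi
      rw [if_neg (by linarith), max_eq_right (by linarith), Pp_zero]; linarith

lemma Psi_le_self {t : ℝ} (ht : 0 ≤ t) : Psi t ≤ t := by
  rcases eq_or_lt_of_le ht with h | h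
  · rw [← h, Psi_nonpos le_rfl]
  · exact (Psi_lt_self h).le

lemma Psi_lt_one_sub {t : ℝ} (ht : t < 1) : Psi t < 1 - t := by
  rcases le_or_gt t 0 with h | h
  · rw [Psi_nonpos h]; linarith
  · rcases le_or_gt t (1/2) with h1 | h1
    · rw [Psi_eq1 h.le h1]
      have := Pp_le_quarter h.le h1
      linarith
    · rw [Psi_eq2 h1.le ht.le]
      have := Pp_secant (x := 0) (y := 1 - t) le_rfl (by linarith) (by linarith)
      rw [Pp_zero] at this; linarith

lemma Psi_secant {u v : ℝ} (h0 : 0 ≤ u) (huv : u < v) (h1 : v ≤ 1) :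
    |Psi v - Psi u| < v - u := by
  rw [abs_sub_lt_iff]
  rcases le_or_gt v (1/2) with hv | hv
  · rw [Psi_eq1 h0 (by linarith), Psi_eq1 (by linarith) hv]
    have h2 := Pp_secant h0 huv hv
    have h3 := Pp_mono h0 huv.le hv
    constructor <;> linarith
  · rcases le_or_gt (1/2) u with hu | hu
    · rw [Psi_eq2 hu (by linarith), Psi_eq2 hv.le h1]
      have h2 := Pp_secant (x := 1 - v) (y := 1 - u) (by linarith) (by linarith) (by linarith)
      have h3 := Pp_mono (x := 1 - v) (y := 1 - u) (by linarith) (by linarith) (by linarith)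
      constructor <;> linarith
    · -- u < 1/2 < v
      rw [Psi_eq1 h0 hu.le, Psi_eq2 hv.le h1]
      rcases lt_trichotomy u (1 - v) with h | h | h
      · have h2 := Pp_secant h0 h (by linarith)
        have h3 := Pp_mono h0 h.le (by linarith)
        constructor <;> linarith
      · rw [← h]; constructor <;> linarith
      · have h2 := Pp_secant (x := 1 - v) (y := u) (by linarith) h hu.le
        have h3 := Pp_mono (x := 1 - v) (y := u) (by linarith) h.le hu.le
        constructor <;> linarith

lemma Psi_quarter_add {t : ℝ} (h : |t| ≤ 1/4) : Psi (1/4 + t) = 1/8 + t - 2*t*|t| := by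
  rw [abs_le] at h
  rw [Psi_eq1 (by linarith) (by linarith), Pp]
  rcases le_or_gt t 0 with ht | ht
  · rw [if_pos (by linarith), abs_of_nonpos ht]; ring
  · rcases eq_or_lt_of_le h.2 with h2 | h2
    · rw [h2, show |(1/4 : ℝ)| = 1/4 from abs_of_pos (by norm_num)]; norm_num
    · rw [if_neg (by push_neg; linarith), abs_of_pos ht]; ring

noncomputable def Fa (a : ℕ → ℝ) (t : ℝ) : ℝ := a ⌊t⌋₊ * Psi (t - ⌊t⌋₊)

lemma Fa_strict (a : ℕ → ℝ) {M : ℝ} (hM : 0 < M) (hb : ∀ n, |a n| ≤ M)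
    {s t : ℝ} (hst : s < t) : |Fa a t - Fa a s| < M * (t - s) := by
  have hts : 0 < t - s := by linarith
  rcases le_or_gt t 0 with ht0 | ht0
  · have h1 : Fa a t = 0 := by
      rw [Fa, Nat.floor_eq_zero.2 (by linarith : t < 1), Psi_nonpos (by simpa using ht0)]
      ring
    have h2 : Fa a s = 0 := by
      rw [Fa, Nat.floor_eq_zero.2 (by linarith : s < 1), Psi_nonpos (by push_cast; linarith)]
      ring
    rw [h1, h2]; simpa using by positivity
  · set m := ⌊t⌋₊ with hm
    have hvm : (m : ℝ) ≤ t := Nat.floor_le ht0.le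
    have hvm1 : t < m + 1 := Nat.lt_floor_add_one t
    set v := t - m with hv
    have hv0 : 0 ≤ v := by simp [hv]; linarith
    have hv1 : v < 1 := by simp [hv]; linarith
    have hFt : Fa a t = a m * Psi v := rfl
    rcases le_or_gt s 0 with hs0 | hs0
    · have h2 : Fa a s = 0 := by
        rw [Fa, Nat.floor_eq_zero.2 (by linarith : s < 1), Psi_nonpos (by push_cast; linarith)]
        ring
      rw [h2, hFt, sub_zero, abs_mul, abs_of_nonneg (Psi_nonneg v)]
      rcases eq_or_lt_of_le hv0 with h | h
      · rw [← h, Psi_nonpos le_rfl]; simpa using by positivity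
      · calc |a m| * Psi v ≤ M * Psi v := by
              have := Psi_nonneg v; exact mul_le_mul_of_nonneg_right (hb m) this
          _ < M * (t - s) := by
              have h3 : Psi v < v := Psi_lt_self h
              have h4 : v ≤ t - s := by
                have : (0:ℝ) ≤ m := Nat.cast_nonneg m
                simp only [hv]; linarith
              exact mul_lt_mul_of_pos_left (lt_of_lt_of_le h3 h4) hM
    · set k := ⌊s⌋₊ with hk
      have hks : (k : ℝ) ≤ s := Nat.floor_le hs0.le
      have hks1 : s < k + 1 := Nat.lt_floor_add_one s
      set u := s - k with hu
      have hu0 : 0 ≤ u := by simp [hu]; linarith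
      have hu1 : u < 1 := by simp [hu]; linarith
      have hFs : Fa a s = a k * Psi u := rfl
      have hkm : k ≤ m := Nat.floor_le_floor hst.le
      rcases eq_or_lt_of_le hkm with he | hlt
      · -- same interval
        have huv : u < v := by simp only [hu, hv, ← he]; linarith
        rw [hFt, hFs, ← he, ← mul_sub, abs_mul]
        calc |a k| * |Psi v - Psi u| ≤ M * |Psi v - Psi u| :=
              mul_le_mul_of_nonneg_right (hb k) (abs_nonneg _)
          _ < M * (t - s) := by
              have := Psi_secant hu0 huv hv1.le
              have heq : v - u = t - s := by rw [hv, hu, ← he]; ring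
              exact mul_lt_mul_of_pos_left (by linarith) hM
      · -- different intervals
        have hm1 : (k:ℝ) + 1 ≤ m := by exact_mod_cast Nat.succ_le_of_lt hlt
        rw [hFt, hFs]
        have h1 : |a m * Psi v - a k * Psi u| ≤ M * Psi v + M * Psi u := by
          calc |a m * Psi v - a k * Psi u| ≤ |a m * Psi v| + |a k * Psi u| := abs_sub _ _
            _ ≤ M * Psi v + M * Psi u := by
                rw [abs_mul, abs_mul, abs_of_nonneg (Psi_nonneg v), abs_of_nonneg (Psi_nonneg u)]
                exact add_le_add (mul_le_mul_of_nonneg_right (hb m) (Psi_nonneg v)) (mul_le_mul_of_nonneg_right (hb k) (Psi_nonneg u))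
        have h2 : Psi v ≤ v := Psi_le_self hv0
        have h3 : Psi u < 1 - u := Psi_lt_one_sub hu1
        have h4 : Psi v + Psi u < t - s := by
          have : v + (1 - u) ≤ t - s := by simp only [hv, hu]; linarith
          linarith
        calc |a m * Psi v - a k * Psi u| ≤ M * (Psi v + Psi u) := by linarith [h1]
          _ < M * (t - s) := mul_lt_mul_of_pos_left h4 hM

lemma Fa_lip (a : ℕ → ℝ) {M : ℝ} (hM : 0 ≤ M) (hb : ∀ n, |a n| ≤ M)
    (s t : ℝ) : |Fa a t - Fa a s| ≤ M * |t - s| := by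
  rcases lt_trichotomy s t with h | h | h
  · rcases eq_or_lt_of_le hM with hM0 | hM0
    · have : ∀ n, a n = 0 := fun n => abs_eq_zero.1 (le_antisymm (hM0 ▸ hb n) (abs_nonneg _))
      simp only [Fa, this, zero_mul, sub_zero, abs_zero]
      exact mul_nonneg hM (abs_nonneg _)
    · rw [abs_of_pos (by linarith : (0:ℝ) < t - s)]
      exact (Fa_strict a hM0 hb h).le
  · simp [h]
  · rcases eq_or_lt_of_le hM with hM0 | hM0
    · have : ∀ n, a n = 0 := fun n => abs_eq_zero.1 (le_antisymm (hM0 ▸ hb n) (abs_nonneg _))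
      simp only [Fa, this, zero_mul, sub_zero, abs_zero]
      exact mul_nonneg hM (abs_nonneg _)
    · rw [abs_sub_comm (Fa a t), abs_sub_comm t s, abs_of_pos (by linarith : (0:ℝ) < s - t)]
      have := (Fa_strict a hM0 hb h).le
      linarith

lemma Fa_zero (a : ℕ → ℝ) : Fa a 0 = 0 := by
  simp [Fa, Psi_nonpos le_rfl]

lemma Fa_at (a : ℕ → ℝ) (N : ℕ) {t : ℝ} (h : |t| ≤ 1/4) :
    Fa a ((N:ℝ) + 1/4 + t) = a N * (1/8 + t - 2*t*|t|) := by
  have habs := abs_le.1 h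
  have hfl : ⌊(N:ℝ) + 1/4 + t⌋₊ = N := by
    rw [Nat.floor_eq_iff (by push_cast; linarith [Nat.cast_nonneg (α := ℝ) N])]
    constructor <;> push_cast <;> linarith
  rw [Fa, hfl, show (N:ℝ) + 1/4 + t - N = 1/4 + t by ring, Psi_quarter_add h]

lemma c0_abs_le (a : C₀(ℕ, ℝ)) (n : ℕ) : |a n| ≤ ‖a‖ := by
  have h := BoundedContinuousFunction.norm_coe_le_norm a.toBCF n
  rwa [ZeroAtInftyContinuousMap.norm_toBCF_eq_norm] at h

lemma c0_exists_max (a : C₀(ℕ, ℝ)) : ∃ N, |a N| = ‖a‖ := by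
  rcases eq_or_ne a 0 with rfl | ha
  · exact ⟨0, by simp⟩
  · have hpos : 0 < ‖a‖ := norm_pos_iff.2 ha
    have htt : Tendsto (fun n => a n) atTop (nhds 0) := by
      have := zero_at_infty a
      rwa [cocompact_eq_atTop] at this
    have hev : ∀ᶠ n in atTop, |a n| < ‖a‖ / 2 := by
      have := Metric.tendsto_atTop.1 htt (‖a‖ / 2) (by linarith)
      rcases this with ⟨N₀, hN₀⟩
      exact eventually_atTop.2 ⟨N₀, fun n hn => by simpa [Real.dist_eq] using hN₀ n hn⟩
    rcases eventually_atTop.1 hev with ⟨N₀, hN₀⟩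
    have hne : (Finset.range (N₀ + 1)).Nonempty := ⟨0, by simp⟩
    obtain ⟨N, hNmem, hNeq⟩ := Finset.exists_mem_eq_sup' hne (fun n => |a n|)
    set M := (Finset.range (N₀ + 1)).sup' hne (fun n => |a n|) with hM
    refine ⟨N, le_antisymm (c0_abs_le a N) ?_⟩
    have hub : ∀ n, |a n| ≤ max M (‖a‖ / 2) := by
      intro n
      rcases le_or_gt n N₀ with h | h
      · exact le_max_of_le_left (Finset.le_sup' (fun n => |a n|) (Finset.mem_range.2 (Nat.lt_succ_of_le h)))
      · exact le_max_of_le_right (hN₀ n h.le).le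
    have : ‖a‖ ≤ max M (‖a‖ / 2) := by
      have h1 : ‖a.toBCF‖ ≤ max M (‖a‖ / 2) := by
        rw [BoundedContinuousFunction.norm_le (le_trans (abs_nonneg _) (hub 0))]
        intro n
        simpa using hub n
      rwa [ZeroAtInftyContinuousMap.norm_toBCF_eq_norm] at h1
    rw [← hNeq]
    rcases max_cases M (‖a‖ / 2) with ⟨h1, _⟩ | ⟨h1, _⟩ <;> rw [h1] at this <;> linarith

/-- For every nontrivial real Banach space `X`, the set `(Der(X) \ SNA(X)) ∪ {0}` contains
an isometric copy of `c₀`. -/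
theorem c0_in_Der_not_SNA {X : Type*} [NormedAddCommGroup X] [NormedSpace ℝ X]
    [CompleteSpace X] [Nontrivial X] :
    ∃ T : C₀(ℕ, ℝ) →ₗ[ℝ] (X → ℝ),
      ∀ a : C₀(ℕ, ℝ),
        MemLip0 (0 : X) (T a) ∧ lipNorm (T a) = ‖a‖ ∧
        (a ≠ 0 → DerAttains (T a) ∧ ¬ StronglyAttains (T a)) := by
  obtain ⟨e, he⟩ := exists_norm_eq X (zero_le_one)
  have hene : e ≠ 0 := by
    intro h; rw [h, norm_zero] at he; norm_num at he
  obtain ⟨g, hg1, hge⟩ := exists_dual_vector ℝ e (norm_ne_zero_iff.2 hene)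
  rw [he] at hge
  refine ⟨{ toFun := fun a x => Fa (a ·) (g x)
            map_add' := by
              intro a b; funext x
              simp only [Fa, ZeroAtInftyContinuousMap.coe_add, Pi.add_apply]
              ring
            map_smul' := by
              intro c a; funext x
              simp only [Fa, ZeroAtInftyContinuousMap.coe_smul, Pi.smul_apply,
                smul_eq_mul, RingHom.id_apply]
              ring }, ?_⟩
  intro a
  simp only [LinearMap.coe_mk, AddHom.coe_mk]
  set f : X → ℝ := fun x => Fa (a ·) (g x) with hf
  have hbound : ∀ n, |a n| ≤ ‖a‖ := c0_abs_le a
  obtain ⟨N, hN⟩ := c0_exists_max a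
  -- Lipschitz bound on X
  have hgdiff : ∀ x y : X, |g x - g y| ≤ dist x y := by
    intro x y
    have h1 : |g (x - y)| ≤ ‖g‖ * ‖x - y‖ := g.le_opNorm (x - y)
    rw [hg1, one_mul, map_sub] at h1
    rwa [dist_eq_norm]
  have key : ∀ x y : X, |f x - f y| ≤ ‖a‖ * dist x y := by
    intro x y
    calc |f x - f y| ≤ ‖a‖ * |g x - g y| := Fa_lip (a ·) (norm_nonneg a) hbound (g y) (g x)
      _ ≤ ‖a‖ * dist x y := mul_le_mul_of_nonneg_left (hgdiff x y) (norm_nonneg a)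
  -- strict bound on X
  have keystrict : ∀ x y : X, (0 < ‖a‖) → x ≠ y → |f x - f y| < ‖a‖ * dist x y := by
    intro x y hpos hxy
    rcases lt_trichotomy (g x) (g y) with h | h | h
    · calc |f x - f y| = |f y - f x| := abs_sub_comm _ _
        _ < ‖a‖ * (g y - g x) := Fa_strict (a ·) hpos hbound h
        _ ≤ ‖a‖ * dist x y := by
            have := hgdiff y x
            rw [abs_sub_comm, dist_comm y x] at this
            have h2 : g y - g x ≤ |g x - g y| := by rw [abs_sub_comm]; exact le_abs_self _
            exact mul_le_mul_of_nonneg_left (le_trans h2 this) (norm_nonneg a)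
    · have : f x = f y := by rw [hf]; simp [h]
      rw [this, sub_self, abs_zero]
      exact mul_pos hpos (dist_pos.2 hxy)
    · calc |f x - f y| < ‖a‖ * (g x - g y) := Fa_strict (a ·) hpos hbound h
        _ ≤ ‖a‖ * dist x y :=
            mul_le_mul_of_nonneg_left (le_trans (le_abs_self _) (hgdiff x y)) (norm_nonneg a)
  -- the set S
  set S := {r : ℝ | ∃ p q : X, p ≠ q ∧ r = |f p - f q| / dist p q} with hS
  have hub : ∀ r ∈ S, r ≤ ‖a‖ := by
    rintro r ⟨p, q, hpq, rfl⟩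
    rw [div_le_iff₀ (dist_pos.2 hpq)]
    exact key p q
  have hbdd : BddAbove S := ⟨‖a‖, hub⟩
  -- witnesses
  have hptq : ∀ t : ℝ, ((N:ℝ) + 1/4 + t) • e - ((N:ℝ) + 1/4) • e = t • e := by
    intro t; rw [← sub_smul]; ring_nf
  have hgsm : ∀ c : ℝ, g (c • e) = c := by
    intro c; rw [map_smul, hge]; simp
  have hfval : ∀ t : ℝ, |t| ≤ 1/4 → f (((N:ℝ) + 1/4 + t) • e) = a N * (1/8 + t - 2*t*|t|) := by
    intro t ht
    rw [hf]
    simp only [hgsm]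
    exact Fa_at (a ·) N ht
  have hfval0 : f (((N:ℝ) + 1/4) • e) = a N * (1/8) := by
    have := hfval 0 (by norm_num)
    simpa using this
  have hne : ∀ t : ℝ, 0 < t → ((N:ℝ) + 1/4 + t) • e ≠ ((N:ℝ) + 1/4) • e := by
    intro t ht hcontra
    have : g (((N:ℝ) + 1/4 + t) • e) = g (((N:ℝ) + 1/4) • e) := by rw [hcontra]
    rw [hgsm, hgsm] at this
    linarith
  have hdist : ∀ t : ℝ, 0 < t → dist (((N:ℝ) + 1/4 + t) • e) (((N:ℝ) + 1/4) • e) = t := by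
    intro t ht
    rw [dist_eq_norm, hptq, norm_smul, he, mul_one, Real.norm_eq_abs, abs_of_pos ht]
  have hmem : ∀ t : ℝ, 0 < t → t < 1/4 → (‖a‖ * (1 - 2*t)) ∈ S := by
    intro t ht ht4
    refine ⟨((N:ℝ) + 1/4 + t) • e, ((N:ℝ) + 1/4) • e, hne t ht, ?_⟩
    rw [hfval t (by rw [abs_of_pos ht]; linarith), hfval0, hdist t ht,
      abs_of_pos ht]
    have hcalc : a N * (1/8 + t - 2*t*t) - a N * (1/8) = a N * (t * (1 - 2*t)) := by ring
    rw [hcalc, abs_mul, abs_mul, abs_of_pos ht, abs_of_pos (by linarith : (0:ℝ) < 1 - 2*t), hN]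
    field_simp
  have hSne : S.Nonempty := ⟨_, hmem (1/8) (by norm_num) (by norm_num)⟩
  have hlipeq : lipNorm f = ‖a‖ := by
    refine le_antisymm (csSup_le hSne hub) ?_
    refine le_of_forall_lt fun c hc => ?_
    rcases lt_or_ge c 0 with hc0 | hc0
    · have h1 : (0:ℝ) ≤ ‖a‖ * (1 - 2*(1/8)) := by positivity
      exact lt_of_lt_of_le (lt_of_lt_of_le hc0 h1)
        (le_csSup hbdd (hmem (1/8) (by norm_num) (by norm_num)))
    · have hpos : 0 < ‖a‖ := lt_of_le_of_lt hc0 hc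
      set t := (‖a‖ - c) / (8 * ‖a‖) with htdef
      have ht0 : 0 < t := div_pos (by linarith) (by positivity)
      have ht4 : t < 1/4 := by
        rw [htdef, div_lt_iff₀ (by positivity)]
        linarith
      have hval : c < ‖a‖ * (1 - 2*t) := by
        have h2 : t * ‖a‖ = (‖a‖ - c)/8 := by rw [htdef]; field_simp
        nlinarith [h2]
      exact lt_of_lt_of_le hval (le_csSup hbdd (hmem t ht0 ht4))
  refine ⟨⟨?_, ⟨‖a‖₊, ?_⟩⟩, hlipeq, fun ha => ⟨?_, ?_⟩⟩
  · -- f 0 = 0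
    rw [hf]
    simp only [map_zero]
    exact Fa_zero (a ·)
  · -- Lipschitz
    apply LipschitzWith.of_dist_le_mul
    intro x y
    rw [Real.dist_eq, coe_nnnorm]
    exact key x y
  · -- DerAttains
    have hapos : 0 < ‖a‖ := norm_pos_iff.2 ha
    refine ⟨((N:ℝ) + 1/4) • e, e, he, a N, ?_, by rw [hlipeq]; exact hN⟩
    have hxte : ∀ t : ℝ, ((N:ℝ)+1/4) • e + t • e = ((N:ℝ)+1/4+t) • e := by
      intro t; rw [← add_smul]
    have hev : ∀ᶠ t in nhdsWithin (0:ℝ) {(0:ℝ)}ᶜ,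
        (f (((N:ℝ)+1/4) • e + t • e) - f (((N:ℝ)+1/4) • e))/t = a N * (1 - 2*|t|) := by
      have h1 : ∀ᶠ t in nhds (0:ℝ), |t| ≤ 1/4 := by
        have hball : Metric.ball (0:ℝ) (1/4) ∈ nhds 0 := Metric.ball_mem_nhds _ (by norm_num)
        filter_upwards [hball] with t ht
        rw [Metric.mem_ball, Real.dist_eq, sub_zero] at ht; exact ht.le
      filter_upwards [eventually_nhdsWithin_of_eventually_nhds h1, self_mem_nhdsWithin]
        with t ht htne
      have htne' : t ≠ 0 := htne
      rw [hxte, hfval t ht, hfval0]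
      field_simp
      ring
    have hcont : Tendsto (fun t : ℝ => a N * (1 - 2*|t|)) (nhdsWithin (0:ℝ) {(0:ℝ)}ᶜ)
        (nhds (a N)) := by
      have hc2 : Continuous fun t : ℝ => a N * (1 - 2*|t|) :=
        continuous_const.mul (continuous_const.sub (continuous_const.mul continuous_abs))
      exact (hc2.tendsto' 0 (a N) (by simp)).mono_left nhdsWithin_le_nhds
    exact Filter.Tendsto.congr' (Filter.EventuallyEq.symm hev) hcont
  · -- not SNA
    rintro ⟨p, q, hpq, heq⟩
    rw [hlipeq] at heq
    have hapos : 0 < ‖a‖ := norm_pos_iff.2 ha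
    exact absurd heq (ne_of_lt (keystrict p q hapos hpq))
end

section
/- For every nontrivial real Banach space X (pointed at its origin), the set (LDirA(X) \ PNA(X)) ∪ {0} contains an isometric copy of ℓ∞: there exists a linear map T : ℓ∞ → Lip₀(X) such that ‖T a‖ = ‖a‖_∞ for every a ∈ ℓ∞, and for every nonzero a ∈ ℓ∞, the function T a attains its norm locally directionally but does not attain its pointwise norm. -/
open Filter Set
open scoped ZeroAtInfty ENNReal NNReal

namespace LDirAux

noncomputable def cK (k : ℕ) : ℝ := 1 - (2:ℝ)⁻¹ ^ (k+1)
noncomputable def tC (m : ℕ) : ℝ := (4:ℝ)⁻¹ ^ (m+1)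
noncomputable def rC (m : ℕ) : ℝ := tC m ^ 2
noncomputable def hat (m : ℕ) (x : ℝ) : ℝ := max 0 (rC m - |x - tC m|)

lemma pow_half_pos (k : ℕ) : 0 < (2:ℝ)⁻¹ ^ (k+1) := by positivity

lemma pow_half_le (k : ℕ) : (2:ℝ)⁻¹ ^ (k+1) ≤ 2⁻¹ := by
  calc (2:ℝ)⁻¹ ^ (k+1) ≤ (2:ℝ)⁻¹ ^ 1 := by
        apply pow_le_pow_of_le_one (by norm_num) (by norm_num) (by omega)
  _ = 2⁻¹ := pow_one _

lemma cK_nonneg (k : ℕ) : 0 ≤ cK k := by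
  have := pow_half_le k; unfold cK; linarith

lemma cK_lt_one (k : ℕ) : cK k < 1 := by
  have := pow_half_pos k; unfold cK; linarith

lemma cK_le_one (k : ℕ) : cK k ≤ 1 := (cK_lt_one k).le

lemma tC_pos (m : ℕ) : 0 < tC m := by unfold tC; positivity

lemma tC_le (m : ℕ) : tC m ≤ 4⁻¹ := by
  calc tC m ≤ (4:ℝ)⁻¹ ^ 1 := by
        apply pow_le_pow_of_le_one (by norm_num) (by norm_num) (by omega)
  _ = 4⁻¹ := pow_one _

lemma tC_anti {m m' : ℕ} (h : m ≤ m') : tC m' ≤ tC m := by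
  apply pow_le_pow_of_le_one (by norm_num) (by norm_num) (by omega)

lemma tC_succ (m : ℕ) : tC (m+1) = tC m * 4⁻¹ := by
  unfold tC; ring

lemma rC_pos (m : ℕ) : 0 < rC m := by
  have := tC_pos m; unfold rC; positivity

lemma rC_le (m : ℕ) : rC m ≤ tC m * 4⁻¹ := by
  have h1 := tC_pos m
  have h2 := tC_le m
  unfold rC; nlinarith

lemma rC_lt_tC (m : ℕ) : rC m < tC m := by
  have := tC_pos m; have := rC_le m; linarith

lemma sep {m m' : ℕ} (h : m < m') : tC m' + rC m' < tC m - rC m := by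
  have h1 : tC m' ≤ tC m * 4⁻¹ := by
    rw [← tC_succ]; exact tC_anti h
  have h2 : rC m' ≤ tC m' * 4⁻¹ := rC_le m'
  have h3 : rC m ≤ tC m * 4⁻¹ := rC_le m
  have h4 : 0 < tC m := tC_pos m
  have h5 : 0 < tC m' := tC_pos m'
  nlinarith

lemma hat_nonneg (m : ℕ) (x : ℝ) : 0 ≤ hat m x := le_max_left _ _

lemma hat_le_rC (m : ℕ) (x : ℝ) : hat m x ≤ rC m := by
  unfold hat
  have : rC m - |x - tC m| ≤ rC m := by have := abs_nonneg (x - tC m); linarith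
  exact max_le (rC_pos m).le this

lemma hat_eq_zero {m : ℕ} {x : ℝ} (h : rC m ≤ |x - tC m|) : hat m x = 0 := by
  unfold hat; exact max_eq_left (by linarith)

lemma hat_pos_mem {m : ℕ} {x : ℝ} (h : hat m x ≠ 0) : |x - tC m| < rC m := by
  by_contra hc; push_neg at hc; exact h (hat_eq_zero hc)

lemma hat_lip (m : ℕ) (x y : ℝ) : |hat m x - hat m y| ≤ |x - y| := by
  unfold hat
  rw [max_comm 0 (rC m - |x - tC m|), max_comm 0 (rC m - |y - tC m|)]
  calc |(rC m - |x - tC m|) ⊔ 0 - (rC m - |y - tC m|) ⊔ 0|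
      ≤ |(rC m - |x - tC m|) - (rC m - |y - tC m|)| := abs_max_sub_max_le_abs _ _ _
    _ = abs (|y - tC m| - |x - tC m|) := by ring_nf
    _ ≤ |(y - tC m) - (x - tC m)| := abs_abs_sub_abs_le_abs_sub _ _
    _ = |x - y| := by rw [← abs_neg]; ring_nf

lemma hat_le_far {m : ℕ} {x y : ℝ} (h : rC m ≤ |y - tC m|) : hat m x ≤ |x - y| := by
  unfold hat
  apply max_le (abs_nonneg _)
  have : |y - tC m| ≤ |x - y| + |x - tC m| := by
    calc |y - tC m| = |(x - tC m) - (x - y)| := by ring_nf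
    _ ≤ |x - tC m| + |x - y| := abs_sub _ _
    _ = |x - y| + |x - tC m| := by ring
  linarith

lemma mem_unique {m m' : ℕ} {x : ℝ} (h : |x - tC m| ≤ rC m) (h' : |x - tC m'| ≤ rC m') :
    m = m' := by
  by_contra hne
  rcases Nat.lt_or_ge m m' with hlt | hge
  · have hs := sep hlt
    have h1 : x ≤ tC m' + rC m' := by have := abs_le.1 h'; linarith [this.2]
    have h2 : tC m - rC m ≤ x := by have := abs_le.1 h; linarith [this.1]
    linarith
  · have hlt' : m' < m := by omega
    have hs := sep hlt'
    have h1 : x ≤ tC m + rC m := by have := abs_le.1 h; linarith [this.2]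
    have h2 : tC m' - rC m' ≤ x := by have := abs_le.1 h'; linarith [this.1]
    linarith

lemma two_hat_aux {m m' : ℕ} {x y : ℝ} (hlt : m < m')
    (hx : |x - tC m| ≤ rC m) (hy : |y - tC m'| ≤ rC m') :
    hat m x + hat m' y ≤ |x - y| := by
  have hs := sep hlt
  have hx' := abs_le.1 hx
  have hy' := abs_le.1 hy
  have hxy : y ≤ x := by linarith [hx'.1, hy'.2]
  have h1 : hat m x ≤ x - (tC m - rC m) := by
    unfold hat
    apply max_le (by linarith [hx'.1])
    have : tC m - x ≤ |x - tC m| := by rw [abs_sub_comm]; exact le_abs_self _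
    linarith
  have h2 : hat m' y ≤ (tC m' + rC m') - y := by
    unfold hat
    apply max_le (by linarith [hy'.2])
    have : y - tC m' ≤ |y - tC m'| := le_abs_self _
    linarith
  have : hat m x + hat m' y ≤ x - y := by linarith
  calc hat m x + hat m' y ≤ x - y := this
  _ ≤ |x - y| := le_abs_self _

lemma two_hat {m m' : ℕ} {x y : ℝ} (hne : m ≠ m')
    (hx : |x - tC m| ≤ rC m) (hy : |y - tC m'| ≤ rC m') :
    hat m x + hat m' y ≤ |x - y| := by
  rcases Nat.lt_or_ge m m' with hlt | hge
  · exact two_hat_aux hlt hx hy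
  · have hlt' : m' < m := by omega
    rw [abs_sub_comm]
    linarith [two_hat_aux hlt' hy hx]

lemma not_mem_nonpos {m : ℕ} {x : ℝ} (hx : x ≤ 0) : rC m ≤ |x - tC m| := by
  have h1 := tC_pos m
  have h2 := rC_lt_tC m
  have : tC m - x ≤ |x - tC m| := by rw [abs_sub_comm]; exact le_abs_self _
  linarith


noncomputable abbrev Linf := lp (fun _ : ℕ => ℝ) ⊤

noncomputable def coef (a : Linf) (m : ℕ) : ℝ := cK m.unpair.2 * a m.unpair.1

noncomputable def phi (a : Linf) (x : ℝ) : ℝ := ∑' m, coef a m * hat m x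

lemma norm_apply_le (a : Linf) (n : ℕ) : |a n| ≤ ‖a‖ := by
  have h := lp.norm_apply_le_norm (E := fun _ : ℕ => ℝ) (p := ⊤) (by norm_num) a n
  rwa [Real.norm_eq_abs] at h

lemma abs_coef_le (a : Linf) (m : ℕ) : |coef a m| ≤ cK m.unpair.2 * ‖a‖ := by
  unfold coef
  rw [abs_mul, abs_of_nonneg (cK_nonneg _)]
  exact mul_le_mul_of_nonneg_left (norm_apply_le a _) (cK_nonneg _)

lemma abs_coef_le' (a : Linf) (m : ℕ) : |coef a m| ≤ ‖a‖ := by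
  calc |coef a m| ≤ cK m.unpair.2 * ‖a‖ := abs_coef_le a m
  _ ≤ 1 * ‖a‖ := mul_le_mul_of_nonneg_right (cK_le_one _) (norm_nonneg a)
  _ = ‖a‖ := one_mul _

lemma summable_aux (a : Linf) (x : ℝ) : Summable fun m => coef a m * hat m x := by
  classical
  by_cases h : ∃ m, hat m x ≠ 0
  · obtain ⟨m₀, h₀⟩ := h
    apply summable_of_ne_finset_zero (s := {m₀})
    intro m hm
    simp only [Finset.mem_singleton] at hm
    have : hat m x = 0 := by
      by_contra h'
      exact hm (mem_unique (hat_pos_mem h').le (hat_pos_mem h₀).le)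
    simp [this]
  · push_neg at h
    have : (fun m => coef a m * hat m x) = fun _ => 0 := by
      funext m; simp [h m]
    rw [this]; exact summable_zero

lemma phi_eval {a : Linf} {m : ℕ} {x : ℝ} (h : |x - tC m| ≤ rC m) :
    phi a x = coef a m * hat m x := by
  unfold phi
  apply tsum_eq_single
  intro m' hne
  have : hat m' x = 0 := by
    by_contra h'
    exact hne (mem_unique (hat_pos_mem h').le h)
  simp [this]

lemma phi_eval_zero {a : Linf} {x : ℝ} (h : ∀ m, rC m ≤ |x - tC m|) : phi a x = 0 := by
  unfold phi
  have : (fun m => coef a m * hat m x) = fun _ => 0 := by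
    funext m; simp [hat_eq_zero (h m)]
  rw [this]; exact tsum_zero

lemma phi_zero_eq (a : Linf) : phi a 0 = 0 :=
  phi_eval_zero (fun m => not_mem_nonpos le_rfl)

lemma phi_add (a b : Linf) (x : ℝ) : phi (a + b) x = phi a x + phi b x := by
  unfold phi
  rw [← Summable.tsum_add (summable_aux a x) (summable_aux b x)]
  congr 1; funext m
  have hab : (↑(a + b) : ℕ → ℝ) = (a : ℕ → ℝ) + b := lp.coeFn_add a b
  unfold coef
  rw [hab]
  simp only [Pi.add_apply]
  ring

lemma phi_smul (c : ℝ) (a : Linf) (x : ℝ) : phi (c • a) x = c * phi a x := by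
  unfold phi
  rw [← tsum_mul_left]
  congr 1; funext m
  have hca : (↑(c • a) : ℕ → ℝ) = c • (a : ℕ → ℝ) := lp.coeFn_smul c a
  unfold coef
  rw [hca]
  simp only [Pi.smul_apply, smul_eq_mul]
  ring

/-- Global Lipschitz estimate. -/
lemma phi_lip (a : Linf) (x y : ℝ) : |phi a x - phi a y| ≤ ‖a‖ * |x - y| := by
  classical
  by_cases hx : ∃ m, |x - tC m| ≤ rC m
  · obtain ⟨m, hm⟩ := hx
    rw [phi_eval hm]
    by_cases hy : ∃ m', |y - tC m'| ≤ rC m'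
    · obtain ⟨m', hm'⟩ := hy
      rw [phi_eval hm']
      by_cases hmm : m = m'
      · subst hmm
        calc |coef a m * hat m x - coef a m * hat m y|
            = |coef a m| * |hat m x - hat m y| := by rw [← abs_mul]; ring_nf
          _ ≤ ‖a‖ * |x - y| :=
            mul_le_mul (abs_coef_le' a m) (hat_lip m x y) (abs_nonneg _) (norm_nonneg a)
      · calc |coef a m * hat m x - coef a m' * hat m' y|
            ≤ |coef a m * hat m x| + |coef a m' * hat m' y| := abs_sub _ _
          _ = |coef a m| * hat m x + |coef a m'| * hat m' y := by
              rw [abs_mul, abs_mul, abs_of_nonneg (hat_nonneg _ _),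
                abs_of_nonneg (hat_nonneg _ _)]
          _ ≤ ‖a‖ * hat m x + ‖a‖ * hat m' y :=
              add_le_add (mul_le_mul_of_nonneg_right (abs_coef_le' a m) (hat_nonneg _ _))
                (mul_le_mul_of_nonneg_right (abs_coef_le' a m') (hat_nonneg _ _))
          _ = ‖a‖ * (hat m x + hat m' y) := by ring
          _ ≤ ‖a‖ * |x - y| :=
              mul_le_mul_of_nonneg_left (two_hat hmm hm hm') (norm_nonneg a)
    · push_neg at hy
      rw [phi_eval_zero (fun m => (hy m).le), sub_zero, abs_mul,
        abs_of_nonneg (hat_nonneg _ _)]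
      exact mul_le_mul (abs_coef_le' a m) (hat_le_far (hy m).le) (hat_nonneg _ _)
        (norm_nonneg a)
  · push_neg at hx
    rw [phi_eval_zero (fun m => (hx m).le)]
    by_cases hy : ∃ m', |y - tC m'| ≤ rC m'
    · obtain ⟨m', hm'⟩ := hy
      rw [phi_eval hm', zero_sub, abs_neg, abs_mul, abs_of_nonneg (hat_nonneg _ _)]
      calc |coef a m'| * hat m' y
          ≤ ‖a‖ * |y - x| :=
            mul_le_mul (abs_coef_le' a m') (hat_le_far (hx m').le) (hat_nonneg _ _) (norm_nonneg a)
        _ = ‖a‖ * |x - y| := by rw [abs_sub_comm]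
    · push_neg at hy
      rw [phi_eval_zero (fun m => (hy m).le)]
      simp only [sub_self, abs_zero]
      positivity


lemma coef_lt (a : Linf) (hA : 0 < ‖a‖) (m : ℕ) : |coef a m| < ‖a‖ := by
  have h1 := abs_coef_le a m
  have h2 := cK_lt_one m.unpair.2
  have h3 := cK_nonneg m.unpair.2
  nlinarith

lemma exists_N (x : ℝ) (hx : 0 < x) : ∃ N : ℕ, tC N ≤ x / 4 := by
  obtain ⟨N, hN⟩ := exists_pow_lt_of_lt_one (by positivity : (0:ℝ) < x / 4)
    (by norm_num : (4⁻¹:ℝ) < 1)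
  refine ⟨N, le_trans ?_ hN.le⟩
  apply pow_le_pow_of_le_one (by norm_num) (by norm_num) (by omega)

lemma key_bound (a : Linf) (hA : 0 < ‖a‖) (x : ℝ) :
    ∃ B, 0 ≤ B ∧ B < ‖a‖ ∧ ∀ y, |phi a x - phi a y| ≤ B * |x - y| := by
  classical
  by_cases hx0 : x ≤ 0
  · -- x ≤ 0 : φ x = 0, every hat is far to the right
    refine ⟨‖a‖/2, by positivity, by linarith, ?_⟩
    intro y
    rw [phi_eval_zero (fun m => not_mem_nonpos hx0), zero_sub, abs_neg]
    by_cases hy : ∃ m, |y - tC m| ≤ rC m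
    · obtain ⟨m, hm⟩ := hy
      rw [phi_eval hm]
      have h1 : |coef a m * hat m y| ≤ ‖a‖ * rC m := by
        rw [abs_mul, abs_of_nonneg (hat_nonneg _ _)]
        exact mul_le_mul (abs_coef_le' a m) (hat_le_rC m y) (hat_nonneg _ _) (norm_nonneg a)
      have hy1 : tC m - rC m ≤ y := by have := (abs_le.1 hm).1; linarith
      have h2 : tC m * (3/4) ≤ |x - y| := by
        have hr := rC_le m
        have ht := tC_pos m
        have : tC m * (3/4) ≤ y - x := by nlinarith
        calc tC m * (3/4) ≤ y - x := this
        _ ≤ |y - x| := le_abs_self _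
        _ = |x - y| := abs_sub_comm _ _
      have hr := rC_le m
      have ht := tC_pos m
      have habs : 0 ≤ |x - y| := abs_nonneg _
      nlinarith
    · push_neg at hy
      rw [phi_eval_zero (fun m => (hy m).le)]
      simp only [abs_zero]
      positivity
  · push_neg at hx0
    obtain ⟨N, hN⟩ := exists_N x hx0
    by_cases hxh : ∃ m, |x - tC m| ≤ rC m
    · -- x belongs to the (unique) hat m₀
      obtain ⟨m₀, hm₀⟩ := hxh
      set F : Finset ℕ := Finset.range (max N m₀ + 1) with hF
      have hFne : F.Nonempty := ⟨0, by simp [hF]⟩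
      set S : ℝ := F.sup' hFne (fun m => |coef a m|) with hS
      have hm₀F : m₀ ∈ F := by simp [hF]
      have hSnn : 0 ≤ S := le_trans (abs_nonneg (coef a m₀)) (Finset.le_sup' (fun m => |coef a m|) hm₀F)
      have hSle : ∀ m ∈ F, |coef a m| ≤ S := fun m hm => Finset.le_sup' (fun m => |coef a m|) hm
      refine ⟨max (‖a‖ * (7/8)) S, le_trans hSnn (le_max_right _ _), ?_, ?_⟩
      · apply max_lt (by linarith)
        rw [hS, Finset.sup'_lt_iff]
        exact fun m _ => coef_lt a hA m
      intro y
      rw [phi_eval hm₀]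
      have hc₀ : |coef a m₀| ≤ max (‖a‖ * (7/8)) S :=
        le_trans (hSle m₀ hm₀F) (le_max_right _ _)
      by_cases hyh : ∃ m', |y - tC m'| ≤ rC m'
      · obtain ⟨m', hm'⟩ := hyh
        rw [phi_eval hm']
        by_cases hmm : m' = m₀
        · subst hmm
          calc |coef a m' * hat m' x - coef a m' * hat m' y|
              = |coef a m'| * |hat m' x - hat m' y| := by rw [← abs_mul]; ring_nf
            _ ≤ max (‖a‖ * (7/8)) S * |x - y| :=
              mul_le_mul hc₀ (hat_lip m' x y) (abs_nonneg _)
                (le_trans hSnn (le_max_right _ _))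
        · by_cases hm'N : m' ≤ N
          · have hm'F : m' ∈ F := by simp [hF]; omega
            have hc' : |coef a m'| ≤ max (‖a‖ * (7/8)) S :=
              le_trans (hSle m' hm'F) (le_max_right _ _)
            calc |coef a m₀ * hat m₀ x - coef a m' * hat m' y|
                ≤ |coef a m₀ * hat m₀ x| + |coef a m' * hat m' y| := abs_sub _ _
              _ = |coef a m₀| * hat m₀ x + |coef a m'| * hat m' y := by
                  rw [abs_mul, abs_mul, abs_of_nonneg (hat_nonneg _ _),
                    abs_of_nonneg (hat_nonneg _ _)]
              _ ≤ max (‖a‖ * (7/8)) S * hat m₀ x + max (‖a‖ * (7/8)) S * hat m' y :=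
                  add_le_add (mul_le_mul_of_nonneg_right hc₀ (hat_nonneg _ _))
                    (mul_le_mul_of_nonneg_right hc' (hat_nonneg _ _))
              _ = max (‖a‖ * (7/8)) S * (hat m₀ x + hat m' y) := by ring
              _ ≤ max (‖a‖ * (7/8)) S * |x - y| :=
                  mul_le_mul_of_nonneg_left (two_hat (fun h => hmm h.symm) hm₀ hm')
                    (le_trans hSnn (le_max_right _ _))
          · -- m' > N : far tiny hat near zero
            push_neg at hm'N
            have htm' : tC m' ≤ tC N := tC_anti (by omega)
            have hy2 : y ≤ x / 2 := by
              have := (abs_le.1 hm').2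
              have := rC_lt_tC m'
              nlinarith
            have hxy : x / 2 ≤ |x - y| := by
              calc x / 2 ≤ x - y := by linarith
              _ ≤ |x - y| := le_abs_self _
            have hphix : |coef a m₀ * hat m₀ x| ≤ ‖a‖ * (x / 3) := by
              rw [abs_mul, abs_of_nonneg (hat_nonneg _ _)]
              have h1 : hat m₀ x ≤ rC m₀ := hat_le_rC _ _
              have h2 : rC m₀ ≤ tC m₀ * 4⁻¹ := rC_le m₀
              have h3 : tC m₀ - rC m₀ ≤ x := by have := (abs_le.1 hm₀).1; linarith
              have h4 : tC m₀ ≤ x * (4/3) := by nlinarith [tC_pos m₀]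
              have h5 : hat m₀ x ≤ x / 3 := by nlinarith [tC_pos m₀]
              exact mul_le_mul (abs_coef_le' a m₀) h5 (hat_nonneg _ _) (norm_nonneg a)
            have hphiy : |coef a m' * hat m' y| ≤ ‖a‖ * (x / 16) := by
              rw [abs_mul, abs_of_nonneg (hat_nonneg _ _)]
              have h1 : hat m' y ≤ rC m' := hat_le_rC _ _
              have h2 : rC m' ≤ tC m' * 4⁻¹ := rC_le m'
              have h5 : hat m' y ≤ x / 16 := by nlinarith [tC_pos m']
              exact mul_le_mul (abs_coef_le' a m') h5 (hat_nonneg _ _) (norm_nonneg a)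
            calc |coef a m₀ * hat m₀ x - coef a m' * hat m' y|
                ≤ |coef a m₀ * hat m₀ x| + |coef a m' * hat m' y| := abs_sub _ _
              _ ≤ ‖a‖ * (x/3) + ‖a‖ * (x/16) := add_le_add hphix hphiy
              _ ≤ (‖a‖ * (7/8)) * (x/2) := by nlinarith
              _ ≤ (‖a‖ * (7/8)) * |x - y| := by
                  apply mul_le_mul_of_nonneg_left hxy (by positivity)
              _ ≤ max (‖a‖ * (7/8)) S * |x - y| :=
                  mul_le_mul_of_nonneg_right (le_max_left _ _) (abs_nonneg _)
      · -- y is in no hat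
        push_neg at hyh
        rw [phi_eval_zero (fun m => (hyh m).le), sub_zero, abs_mul,
          abs_of_nonneg (hat_nonneg _ _)]
        exact mul_le_mul hc₀ (hat_le_far (hyh m₀).le) (hat_nonneg _ _)
          (le_trans hSnn (le_max_right _ _))
    · -- x is in no hat: φ x = 0
      push_neg at hxh
      set F : Finset ℕ := Finset.range (N + 1) with hF
      have hFne : F.Nonempty := ⟨0, by simp [hF]⟩
      set S : ℝ := F.sup' hFne (fun m => |coef a m|) with hS
      have h0F : (0:ℕ) ∈ F := by simp [hF]
      have hSnn : 0 ≤ S := le_trans (abs_nonneg (coef a 0)) (Finset.le_sup' (fun m => |coef a m|) h0F)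
      refine ⟨max (‖a‖ * (7/8)) S, le_trans hSnn (le_max_right _ _), ?_, ?_⟩
      · apply max_lt (by linarith)
        rw [hS, Finset.sup'_lt_iff]
        exact fun m _ => coef_lt a hA m
      intro y
      rw [phi_eval_zero (fun m => (hxh m).le), zero_sub, abs_neg]
      by_cases hyh : ∃ m', |y - tC m'| ≤ rC m'
      · obtain ⟨m', hm'⟩ := hyh
        rw [phi_eval hm']
        by_cases hm'N : m' ≤ N
        · have hm'F : m' ∈ F := by simp [hF]; omega
          have hc' : |coef a m'| ≤ max (‖a‖ * (7/8)) S :=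
            le_trans (Finset.le_sup' (fun m => |coef a m|) hm'F) (le_max_right _ _)
          rw [abs_mul, abs_of_nonneg (hat_nonneg _ _)]
          calc |coef a m'| * hat m' y
              ≤ max (‖a‖ * (7/8)) S * |y - x| :=
                mul_le_mul hc' (hat_le_far (hxh m').le) (hat_nonneg _ _)
                  (le_trans hSnn (le_max_right _ _))
            _ = max (‖a‖ * (7/8)) S * |x - y| := by rw [abs_sub_comm]
        · push_neg at hm'N
          have htm' : tC m' ≤ tC N := tC_anti (by omega)
          have hy2 : y ≤ x / 2 := by
            have := (abs_le.1 hm').2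
            have := rC_lt_tC m'
            nlinarith
          have hxy : x / 2 ≤ |x - y| := by
            calc x / 2 ≤ x - y := by linarith
            _ ≤ |x - y| := le_abs_self _
          have hphiy : |coef a m' * hat m' y| ≤ ‖a‖ * (x / 16) := by
            rw [abs_mul, abs_of_nonneg (hat_nonneg _ _)]
            have h1 : hat m' y ≤ rC m' := hat_le_rC _ _
            have h2 : rC m' ≤ tC m' * 4⁻¹ := rC_le m'
            have h5 : hat m' y ≤ x / 16 := by nlinarith [tC_pos m']
            exact mul_le_mul (abs_coef_le' a m') h5 (hat_nonneg _ _) (norm_nonneg a)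
          calc |coef a m' * hat m' y|
              ≤ ‖a‖ * (x/16) := hphiy
            _ ≤ (‖a‖ * (7/8)) * (x/2) := by nlinarith
            _ ≤ (‖a‖ * (7/8)) * |x - y| :=
                mul_le_mul_of_nonneg_left hxy (by positivity)
            _ ≤ max (‖a‖ * (7/8)) S * |x - y| :=
                mul_le_mul_of_nonneg_right (le_max_left _ _) (abs_nonneg _)
      · push_neg at hyh
        rw [phi_eval_zero (fun m => (hyh m).le)]
        simp only [abs_zero]
        positivity

lemma norm_eq_csSup (a : Linf) : ‖a‖ = ⨆ n, |a n| := by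
  rw [lp.norm_eq_ciSup]
  simp only [Real.norm_eq_abs]

lemma exists_coef_near (a : Linf) {δ : ℝ} (hδ : 0 < δ) (hδA : δ ≤ ‖a‖) :
    ∃ m, ‖a‖ - δ < |coef a m| := by
  have hA : 0 < ‖a‖ := lt_of_lt_of_le hδ hδA
  have h1 : ‖a‖ - δ/2 < ⨆ n, |a n| := by rw [← norm_eq_csSup]; linarith
  obtain ⟨n, hn⟩ := exists_lt_of_lt_ciSup h1
  obtain ⟨k, hk⟩ := exists_pow_lt_of_lt_one (by positivity : (0:ℝ) < δ/(2*‖a‖))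
    (by norm_num : (2⁻¹:ℝ) < 1)
  refine ⟨Nat.pair n k, ?_⟩
  have hcoef : coef a (Nat.pair n k) = cK k * a n := by
    unfold coef; rw [Nat.unpair_pair]
  rw [hcoef, abs_mul, abs_of_nonneg (cK_nonneg k)]
  have hank : |a n| ≤ ‖a‖ := norm_apply_le a n
  have hkk : (2⁻¹:ℝ)^(k+1) ≤ (2⁻¹:ℝ)^k := by
    apply pow_le_pow_of_le_one (by norm_num) (by norm_num) (by omega)
  have hk2 : (2⁻¹:ℝ)^(k+1) * ‖a‖ < δ/2 := by
    have : (2⁻¹:ℝ)^k * ‖a‖ < (δ/(2*‖a‖)) * ‖a‖ :=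
      mul_lt_mul_of_pos_right hk hA
    have h2 : (δ/(2*‖a‖)) * ‖a‖ = δ/2 := by
      rw [div_mul_eq_mul_div, mul_comm δ ‖a‖, mul_comm 2 ‖a‖,
        mul_div_mul_left _ _ (ne_of_gt hA)]
    nlinarith [pow_half_pos k, norm_nonneg a]
  have hck : cK k * |a n| = |a n| - (2⁻¹:ℝ)^(k+1) * |a n| := by unfold cK; ring
  rw [hck]
  have h3 : (2⁻¹:ℝ)^(k+1) * |a n| ≤ (2⁻¹:ℝ)^(k+1) * ‖a‖ :=
    mul_le_mul_of_nonneg_left hank (by positivity)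
  linarith


section Embed

variable {X : Type*} [NormedAddCommGroup X] [NormedSpace ℝ X]
variable {e : X} {g : X →L[ℝ] ℝ}

lemma e_ne (he : ‖e‖ = 1) : e ≠ 0 := by
  intro h; rw [h, norm_zero] at he; norm_num at he

lemma g_line (hge : g e = 1) (t : ℝ) : g (t • e) = t := by
  rw [map_smul, hge, smul_eq_mul, mul_one]

lemma g_bound (hg : ‖g‖ = 1) (P Q : X) : |g P - g Q| ≤ ‖P - Q‖ := by
  calc |g P - g Q| = ‖g (P - Q)‖ := by rw [map_sub]; rw [Real.norm_eq_abs]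
  _ ≤ ‖g‖ * ‖P - Q‖ := g.le_opNorm _
  _ = ‖P - Q‖ := by rw [hg, one_mul]

lemma f_lip (hg : ‖g‖ = 1) (a : Linf) (P Q : X) :
    |phi a (g P) - phi a (g Q)| ≤ ‖a‖ * ‖P - Q‖ := by
  calc |phi a (g P) - phi a (g Q)| ≤ ‖a‖ * |g P - g Q| := phi_lip a _ _
  _ ≤ ‖a‖ * ‖P - Q‖ := mul_le_mul_of_nonneg_left (g_bound hg P Q) (norm_nonneg a)

lemma pq_facts (he : ‖e‖ = 1) (hge : g e = 1) (a : Linf) (m : ℕ) :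
    phi a (g ((tC m - rC m) • e)) = 0 ∧
    phi a (g (tC m • e)) = coef a m * rC m ∧
    ‖tC m • e - (tC m - rC m) • e‖ = rC m ∧
    (tC m - rC m) • e ≠ tC m • e := by
  have h1 : phi a (g ((tC m - rC m) • e)) = 0 := by
    rw [g_line hge]
    rw [phi_eval (m := m) (by rw [show tC m - rC m - tC m = -(rC m) by ring, abs_neg,
      abs_of_pos (rC_pos m)])]
    have : hat m (tC m - rC m) = 0 := by
      apply hat_eq_zero
      rw [show tC m - rC m - tC m = -(rC m) by ring, abs_neg, abs_of_pos (rC_pos m)]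
    rw [this, mul_zero]
  have h2 : phi a (g (tC m • e)) = coef a m * rC m := by
    rw [g_line hge]
    rw [phi_eval (m := m) (by rw [sub_self, abs_zero]; exact (rC_pos m).le)]
    have : hat m (tC m) = rC m := by
      unfold hat
      rw [sub_self, abs_zero, sub_zero]
      exact max_eq_right (rC_pos m).le
    rw [this]
  have h3 : ‖tC m • e - (tC m - rC m) • e‖ = rC m := by
    rw [← sub_smul, show tC m - (tC m - rC m) = rC m by ring, norm_smul, he,
      Real.norm_eq_abs, abs_of_pos (rC_pos m), mul_one]
  refine ⟨h1, h2, h3, ?_⟩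
  intro hcon
  rw [← sub_eq_zero] at hcon
  rw [← sub_smul] at hcon
  rcases smul_eq_zero.1 hcon with h | h
  · have := rC_pos m; rw [show tC m - rC m - tC m = -(rC m) by ring] at h; linarith [neg_eq_zero.1 h]
  · exact e_ne he h

lemma lipNorm_eq (he : ‖e‖ = 1) (hg : ‖g‖ = 1) (hge : g e = 1) (a : Linf) :
    lipNorm (fun P : X => phi a (g P)) = ‖a‖ := by
  unfold lipNorm
  have hub : ∀ r ∈ {r : ℝ | ∃ p q : X, p ≠ q ∧
      r = |phi a (g p) - phi a (g q)| / dist p q}, r ≤ ‖a‖ := by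
    rintro r ⟨p, q, hpq, rfl⟩
    rw [div_le_iff₀ (dist_pos.2 hpq)]
    calc |phi a (g p) - phi a (g q)| ≤ ‖a‖ * ‖p - q‖ := f_lip hg a p q
    _ = ‖a‖ * dist p q := by rw [dist_eq_norm]
  have hbdd : BddAbove {r : ℝ | ∃ p q : X, p ≠ q ∧
      r = |phi a (g p) - phi a (g q)| / dist p q} := ⟨‖a‖, fun r hr => hub r hr⟩
  have hmem : ∀ m : ℕ, |coef a m| ∈ {r : ℝ | ∃ p q : X, p ≠ q ∧
      r = |phi a (g p) - phi a (g q)| / dist p q} := by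
    intro m
    obtain ⟨h1, h2, h3, h4⟩ := pq_facts he hge a m
    refine ⟨(tC m - rC m) • e, tC m • e, h4, ?_⟩
    rw [h1, h2, dist_eq_norm, norm_sub_rev, h3, zero_sub, abs_neg, abs_mul,
      abs_of_pos (rC_pos m), mul_div_assoc, div_self (ne_of_gt (rC_pos m)), mul_one]
  have h0 : 0 ≤ sSup {r : ℝ | ∃ p q : X, p ≠ q ∧
      r = |phi a (g p) - phi a (g q)| / dist p q} :=
    le_trans (abs_nonneg (coef a 0)) (le_csSup hbdd (hmem 0))
  apply le_antisymm (Real.sSup_le hub (norm_nonneg a))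
  by_contra hlt
  push_neg at hlt
  obtain ⟨m, hm⟩ := exists_coef_near a (show 0 < ‖a‖ - sSup _ by linarith) (by linarith)
  have := le_csSup hbdd (hmem m)
  linarith

lemma not_pna (he : ‖e‖ = 1) (hg : ‖g‖ = 1) (hge : g e = 1) (a : Linf) (ha : a ≠ 0) :
    ¬ PointwiseAttains (fun P : X => phi a (g P)) := by
  have hA : 0 < ‖a‖ := norm_pos_iff.2 ha
  rintro ⟨P, hP⟩
  rw [lipNorm_eq he hg hge a] at hP
  obtain ⟨B, hB0, hBA, hB⟩ := key_bound a hA (g P)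
  have hle : sSup {r : ℝ | ∃ q : X, q ≠ P ∧
      r = |phi a (g P) - phi a (g q)| / dist P q} ≤ B := by
    apply Real.sSup_le _ hB0
    rintro r ⟨q, hq, rfl⟩
    rw [div_le_iff₀ (dist_pos.2 (Ne.symm hq))]
    calc |phi a (g P) - phi a (g q)| ≤ B * |g P - g q| := hB (g q)
    _ ≤ B * ‖P - q‖ := mul_le_mul_of_nonneg_left (g_bound hg P q) hB0
    _ = B * dist P q := by rw [dist_eq_norm]
  rw [hP] at hle
  linarith

lemma cK_tendsto : Tendsto (fun k : ℕ => cK k) atTop (nhds 1) := by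
  have h1 : Tendsto (fun k : ℕ => (2⁻¹:ℝ) ^ (k+1)) atTop (nhds 0) := by
    have := (tendsto_pow_atTop_nhds_zero_of_lt_one (by norm_num : (0:ℝ) ≤ 2⁻¹)
      (by norm_num : (2⁻¹:ℝ) < 1)).comp (tendsto_add_atTop_nat 1)
    exact this
  have := h1.const_sub 1
  simpa [cK] using this

lemma tC_tendsto : Tendsto (fun m : ℕ => tC m) atTop (nhds 0) := by
  have := (tendsto_pow_atTop_nhds_zero_of_lt_one (by norm_num : (0:ℝ) ≤ 4⁻¹)
    (by norm_num : (4⁻¹:ℝ) < 1)).comp (tendsto_add_atTop_nat 1)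
  exact this

lemma locdir_of_sup (he : ‖e‖ = 1) (hg : ‖g‖ = 1) (hge : g e = 1) (a : Linf)
    (hA : 0 < ‖a‖) (hsup : (⨆ n, a n) = ‖a‖) :
    LocDirAttains (fun P : X => phi a (g P)) := by
  have hlip := lipNorm_eq he hg hge a
  have hchoice : ∀ j : ℕ, ∃ n, ‖a‖ - 1/(j+1) < a n := by
    intro j
    apply exists_lt_of_lt_ciSup
    rw [hsup]
    have : (0:ℝ) < 1/((j:ℝ)+1) := by positivity
    linarith
  choose n hn using hchoice
  set m : ℕ → ℕ := fun j => Nat.pair (n j) j with hm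
  have hcoefj : ∀ j, coef a (m j) = cK j * a (n j) := by
    intro j
    unfold coef
    rw [hm]
    simp only [Nat.unpair_pair]
  -- tC (m j) → 0
  have htm : Tendsto (fun j => tC (m j)) atTop (nhds 0) := by
    apply tendsto_of_tendsto_of_tendsto_of_le_of_le tendsto_const_nhds tC_tendsto
    · intro j; exact (tC_pos _).le
    · intro j; exact tC_anti (Nat.right_le_pair (n j) j)
  refine ⟨0, -e, ‖a‖, by rw [norm_neg, he], by rw [hlip]; exact abs_of_nonneg (norm_nonneg a),
    fun j => (tC (m j) - rC (m j)) • e, fun j => tC (m j) • e,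
    fun j => (pq_facts he hge a (m j)).2.2.2, ?_, ?_, ?_, ?_⟩
  · -- slopes tend to ‖a‖
    have heq : ∀ j, (phi a (g (tC (m j) • e)) - phi a (g ((tC (m j) - rC (m j)) • e))) /
        ‖tC (m j) • e - (tC (m j) - rC (m j)) • e‖ = coef a (m j) := by
      intro j
      obtain ⟨h1, h2, h3, _⟩ := pq_facts he hge a (m j)
      rw [h1, h2, h3, sub_zero, mul_div_assoc, div_self (ne_of_gt (rC_pos _)), mul_one]
    have hmain : Tendsto (fun j => coef a (m j)) atTop (nhds ‖a‖) := by
      have hlow : Tendsto (fun j : ℕ => cK j * (‖a‖ - 1/((j:ℝ)+1))) atTop (nhds ‖a‖) := by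
        have h2 : Tendsto (fun j : ℕ => ‖a‖ - 1/((j:ℝ)+1)) atTop (nhds (‖a‖ - 0)) :=
          tendsto_const_nhds.sub tendsto_one_div_add_atTop_nhds_zero_nat
        rw [sub_zero] at h2
        have h3 := cK_tendsto.mul h2
        rw [one_mul] at h3
        exact h3
      apply tendsto_of_tendsto_of_tendsto_of_le_of_le hlow tendsto_const_nhds
      · intro j
        show cK j * (‖a‖ - 1/((j:ℝ)+1)) ≤ coef a (m j)
        rw [hcoefj j]
        exact mul_le_mul_of_nonneg_left (hn j).le (cK_nonneg j)
      · intro j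
        show coef a (m j) ≤ ‖a‖
        rw [hcoefj j]
        calc cK j * a (n j) ≤ cK j * ‖a‖ :=
              mul_le_mul_of_nonneg_left
                (le_trans (le_abs_self _) (norm_apply_le a (n j))) (cK_nonneg j)
        _ ≤ 1 * ‖a‖ := mul_le_mul_of_nonneg_right (cK_le_one j) (norm_nonneg a)
        _ = ‖a‖ := one_mul _
    exact Tendsto.congr (fun j => (heq j).symm) hmain
  · -- direction
    have hdir : ∀ j, ‖(tC (m j) - rC (m j)) • e - tC (m j) • e‖⁻¹ •
        ((tC (m j) - rC (m j)) • e - tC (m j) • e) = -e := by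
      intro j
      rw [← sub_smul, show tC (m j) - rC (m j) - tC (m j) = -(rC (m j)) by ring,
        norm_smul, Real.norm_eq_abs, abs_neg, abs_of_pos (rC_pos _), he, mul_one,
        smul_smul]
      rw [show (rC (m j))⁻¹ * -(rC (m j)) = -1 by
        rw [mul_neg, inv_mul_cancel₀ (ne_of_gt (rC_pos (m j)))]]
      rw [neg_one_smul]
    exact Tendsto.congr (fun j => (hdir j).symm) tendsto_const_nhds
  · -- p → 0
    have hc : Tendsto (fun j => tC (m j) - rC (m j)) atTop (nhds 0) := by
      apply tendsto_of_tendsto_of_tendsto_of_le_of_le tendsto_const_nhds htm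
      · intro j
        show (0:ℝ) ≤ tC (m j) - rC (m j)
        linarith [rC_lt_tC (m j)]
      · intro j
        show tC (m j) - rC (m j) ≤ tC (m j)
        linarith [rC_pos (m j)]
    have := hc.smul_const e
    simpa using this
  · have := htm.smul_const e
    simpa using this

lemma phi_neg (a : Linf) (x : ℝ) : phi (-a) x = - phi a x := by
  have h := phi_smul (-1) a x
  rw [neg_one_smul] at h
  rw [h]
  ring

lemma lipNorm_neg {M : Type*} [MetricSpace M] (f : M → ℝ) :
    lipNorm (fun x => - f x) = lipNorm f := by
  unfold lipNorm
  congr 1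
  ext r
  constructor
  · rintro ⟨p, q, h, rfl⟩
    exact ⟨p, q, h, by rw [show -f p - -f q = -(f p - f q) by ring, abs_neg]⟩
  · rintro ⟨p, q, h, rfl⟩
    exact ⟨p, q, h, by rw [show -f p - -f q = -(f p - f q) by ring, abs_neg]⟩

lemma locdir_neg {f : X → ℝ} (h : LocDirAttains (fun P => - f P)) : LocDirAttains f := by
  obtain ⟨xbar, u, z, hu, hz, p, q, hpq, hs, hd, hp, hq⟩ := h
  refine ⟨xbar, u, -z, hu, ?_, p, q, hpq, ?_, hd, hp, hq⟩
  · rw [abs_neg, hz, lipNorm_neg]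
  · have heq : ∀ j, (f (q j) - f (p j)) / ‖q j - p j‖ =
        -((- f (q j) - - f (p j)) / ‖q j - p j‖) := by
      intro j; ring
    exact Tendsto.congr (fun j => (heq j).symm) hs.neg

end Embed

end LDirAux

/-- For every nontrivial real Banach space `X`, the set `(LDirA(X) \ PNA(X)) ∪ {0}`
contains an isometric copy of `ℓ∞`. -/
theorem linfty_in_LDirA_not_PNA {X : Type*} [NormedAddCommGroup X] [NormedSpace ℝ X]
    [CompleteSpace X] [Nontrivial X] :
    ∃ T : lp (fun _ : ℕ => ℝ) ⊤ →ₗ[ℝ] (X → ℝ),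
      ∀ a : lp (fun _ : ℕ => ℝ) ⊤,
        MemLip0 (0 : X) (T a) ∧ lipNorm (T a) = ‖a‖ ∧
        (a ≠ 0 → LocDirAttains (T a) ∧ ¬ PointwiseAttains (T a)) := by
  classical
  obtain ⟨x0, hx0⟩ := exists_ne (0 : X)
  set e : X := ‖x0‖⁻¹ • x0 with hedef
  have he : ‖e‖ = 1 := by
    rw [hedef, norm_smul, norm_inv, norm_norm]
    exact inv_mul_cancel₀ (norm_ne_zero_iff.mpr hx0)
  obtain ⟨g, hg, hge0⟩ := exists_dual_vector ℝ e (norm_ne_zero_iff.mpr (LDirAux.e_ne he))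
  have hge : g e = 1 := by
    rw [he] at hge0
    simpa using hge0
  refine ⟨{ toFun := fun a => fun P => LDirAux.phi a (g P),
            map_add' := fun a b => funext fun P => LDirAux.phi_add a b (g P),
            map_smul' := fun c a => funext fun P => by
              simp only [RingHom.id_apply, Pi.smul_apply, smul_eq_mul]
              exact LDirAux.phi_smul c a (g P) }, ?_⟩
  intro a
  refine ⟨⟨?_, ⟨‖a‖₊, ?_⟩⟩, LDirAux.lipNorm_eq he hg hge a,
    fun ha => ⟨?_, LDirAux.not_pna he hg hge a ha⟩⟩
  · show LDirAux.phi a (g 0) = 0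
    rw [map_zero, LDirAux.phi_zero_eq]
  · apply LipschitzWith.of_dist_le_mul
    intro P Q
    show dist (LDirAux.phi a (g P)) (LDirAux.phi a (g Q)) ≤ ‖a‖₊ * dist P Q
    rw [Real.dist_eq, dist_eq_norm, coe_nnnorm]
    exact LDirAux.f_lip hg a P Q
  · -- locally directionally attained
    have hA : 0 < ‖a‖ := norm_pos_iff.2 ha
    have hbdd1 : BddAbove (Set.range fun n => (a : ℕ → ℝ) n) := by
      refine ⟨‖a‖, ?_⟩
      rintro r ⟨n, rfl⟩
      exact le_trans (le_abs_self _) (LDirAux.norm_apply_le a n)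
    have hbdd2 : BddAbove (Set.range fun n => -((a : ℕ → ℝ) n)) := by
      refine ⟨‖a‖, ?_⟩
      rintro r ⟨n, rfl⟩
      exact le_trans (neg_le_abs _) (LDirAux.norm_apply_le a n)
    have hd : (⨆ n, (a : ℕ → ℝ) n) = ‖a‖ ∨ (⨆ n, -((a : ℕ → ℝ) n)) = ‖a‖ := by
      by_contra hcon
      push_neg at hcon
      obtain ⟨h1, h2⟩ := hcon
      have l1 : (⨆ n, (a : ℕ → ℝ) n) ≤ ‖a‖ :=
        ciSup_le fun n => le_trans (le_abs_self _) (LDirAux.norm_apply_le a n)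
      have l2 : (⨆ n, -((a : ℕ → ℝ) n)) ≤ ‖a‖ :=
        ciSup_le fun n => le_trans (neg_le_abs _) (LDirAux.norm_apply_le a n)
      have hmax : ‖a‖ ≤ max (⨆ n, (a : ℕ → ℝ) n) (⨆ n, -((a : ℕ → ℝ) n)) := by
        rw [LDirAux.norm_eq_csSup]
        apply ciSup_le
        intro n
        rcases abs_cases ((a : ℕ → ℝ) n) with ⟨h, _⟩ | ⟨h, _⟩
        · rw [h]
          exact le_trans (le_ciSup hbdd1 n) (le_max_left _ _)
        · rw [h]
          exact le_trans (le_ciSup hbdd2 n) (le_max_right _ _)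
      have := max_lt (lt_of_le_of_ne l1 h1) (lt_of_le_of_ne l2 h2)
      linarith
    rcases hd with h1 | h2
    · exact LDirAux.locdir_of_sup he hg hge a hA h1
    · have hcoe : (fun n => ((-a : lp (fun _ : ℕ => ℝ) ⊤) : ℕ → ℝ) n) =
          fun n => -((a : ℕ → ℝ) n) := by
        funext n
        rw [lp.coeFn_neg]
        rfl
      have hs2 : (⨆ n, ((-a : lp (fun _ : ℕ => ℝ) ⊤) : ℕ → ℝ) n) = ‖(-a : lp (fun _ : ℕ => ℝ) ⊤)‖ := by
        rw [norm_neg, hcoe]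
        exact h2
      have hA2 : 0 < ‖(-a : lp (fun _ : ℕ => ℝ) ⊤)‖ := by rwa [norm_neg]
      have hloc := LDirAux.locdir_of_sup he hg hge (-a) hA2 hs2
      have hfun : (fun P : X => LDirAux.phi (-a) (g P)) =
          fun P : X => -(LDirAux.phi a (g P)) := by
        funext P
        exact LDirAux.phi_neg a (g P)
      rw [hfun] at hloc
      exact LDirAux.locdir_neg hloc
end
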